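/- arXiv:1411.4382 — 12 statements merged into one kernel-verified Lean document; each statement's English description precedes it below -/
import Mathlib

section
/- Let E be a real finite-dimensional Euclidean space, f : E → ℝ ∪ {+∞} a proper extended real-valued function, and x̄ ∈ dom f. If x̄ is an isolated local minimizer of second order for f, then f⁻(x̄;u) ≥ 0 for all u ∈ E and f⁻²(x̄;0;u) > 0 for all u ∈ E with u ≠ 0. -/
open Filter Topology

/-- The lower Hadamard directional derivative
`f⁻(x;u) = liminf_{t↓0, u'→u} (f(x+tu') − f(x))/t`, with values in `EReal`. -/
noncomputable def hadamardD1 {E : Type*} [NormedAddCommGroup E] [InnerProductSpace ℝ E]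
    (f : E → EReal) (x u : E) : EReal :=
  Filter.liminf
    (fun p : ℝ × E => (((p.1)⁻¹ : ℝ) : EReal) * (f (x + p.1 • p.2) - f x))
    ((𝓝[>] (0 : ℝ)) ×ˢ 𝓝 u)

/-- The lower Hadamard subdifferential
`∂⁻f(x) = {x* continuous linear | x*(u) ≤ f⁻(x;u) for all u}`. -/
def hadamardSubdiff {E : Type*} [NormedAddCommGroup E] [InnerProductSpace ℝ E]
    (f : E → EReal) (x : E) : Set (E →L[ℝ] ℝ) :=
  {xs | ∀ u : E, ((xs u : ℝ) : EReal) ≤ hadamardD1 f x u}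

/-- The lower second-order Hadamard derivative relative to `x₁ ∈ ∂⁻f(x)`:
`f⁻²(x;x₁;u) = liminf_{t↓0, u'→u} 2(f(x+tu') − f(x) − t·x₁(u'))/t²`. -/
noncomputable def hadamardD2 {E : Type*} [NormedAddCommGroup E] [InnerProductSpace ℝ E]
    (f : E → EReal) (x : E) (x₁ : E →L[ℝ] ℝ) (u : E) : EReal :=
  Filter.liminf
    (fun p : ℝ × E =>
      ((2 / p.1 ^ 2 : ℝ) : EReal) * (f (x + p.1 • p.2) - f x - ((p.1 * x₁ p.2 : ℝ) : EReal)))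
    ((𝓝[>] (0 : ℝ)) ×ˢ 𝓝 u)

/-- `x̄` is an isolated local minimizer of second order for `f`: there are a
neighborhood `N` of `x̄` and a constant `C > 0` with
`f(x) > f(x̄) + C‖x−x̄‖²` for all `x ∈ N`, `x ≠ x̄`. -/
def IsolatedLocalMinOrder2 {E : Type*} [NormedAddCommGroup E] [InnerProductSpace ℝ E]
    (f : E → EReal) (x₀ : E) : Prop :=
  ∃ C : ℝ, 0 < C ∧ ∃ N ∈ 𝓝 x₀, ∀ x ∈ N, x ≠ x₀ →
    f x₀ + ((C * ‖x - x₀‖ ^ 2 : ℝ) : EReal) < f x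


lemma coe_mul_le_of_pos {c r : ℝ} (hc : 0 < c) {a : EReal} (h : (r : EReal) ≤ a) :
    ((c * r : ℝ) : EReal) ≤ (c : EReal) * a := by
  induction a using EReal.rec with
  | bot => simp at h
  | coe x =>
      rw [← EReal.coe_mul, EReal.coe_le_coe_iff]
      exact mul_le_mul_of_nonneg_left (by exact_mod_cast h) hc.le
  | top => rw [EReal.coe_mul_top_of_pos hc]; exact le_top

/-- If `x̄ ∈ dom f` is an isolated local minimizer of second order
for the proper extended real-valued function `f`, then `f⁻(x̄;u) ≥ 0` for all `u`
and `f⁻²(x̄;0;u) > 0` for all `u ≠ 0`. -/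
theorem isolated_local_min_order2_necessary
    {E : Type*} [NormedAddCommGroup E] [InnerProductSpace ℝ E] [FiniteDimensional ℝ E]
    (f : E → EReal) (hproper : (∀ x, f x ≠ ⊥) ∧ ∃ x, f x ≠ ⊤)
    (x₀ : E) (hdom : f x₀ ≠ ⊤)
    (hmin : IsolatedLocalMinOrder2 f x₀) :
    (∀ u : E, 0 ≤ hadamardD1 f x₀ u) ∧
      ∀ u : E, u ≠ 0 → 0 < hadamardD2 f x₀ 0 u := by
  obtain ⟨hbot, -⟩ := hproper
  obtain ⟨C, hC, N, hN, hfN⟩ := hmin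
  have hr : ((f x₀).toReal : EReal) = f x₀ := EReal.coe_toReal hdom (hbot x₀)
  set r : ℝ := (f x₀).toReal with hrdef
  have key : ∀ x ∈ N, ((C * ‖x - x₀‖ ^ 2 : ℝ) : EReal) ≤ f x - f x₀ := by
    intro x hx
    by_cases hxe : x = x₀
    · subst hxe
      simp only [sub_self, norm_zero]
      rw [← hr, ← EReal.coe_sub]
      norm_num
    · have h1 := hfN x hx hxe
      rw [EReal.le_sub_iff_add_le (Or.inl (hr ▸ EReal.coe_ne_bot r))
        (Or.inl (hr ▸ EReal.coe_ne_top r))]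
      rw [add_comm] at h1
      exact h1.le
  obtain ⟨ε, hε, hball⟩ := Metric.mem_nhds_iff.1 hN
  constructor
  · intro u
    set M : ℝ := ‖u‖ + 1 with hM
    have hMpos : 0 < M := by positivity
    have hev : ∀ᶠ p : ℝ × E in (𝓝[>] (0 : ℝ)) ×ˢ 𝓝 u,
        0 ≤ (((p.1)⁻¹ : ℝ) : EReal) * (f (x₀ + p.1 • p.2) - f x₀) := by
      have h1 : ∀ᶠ t : ℝ in 𝓝[>] (0 : ℝ), 0 < t ∧ t < ε / M := by
        filter_upwards [Ioo_mem_nhdsGT_of_mem (c := (0:ℝ)) (b := (0:ℝ)) (a := ε / M) (Set.mem_Ico.2 ⟨le_refl 0, by positivity⟩)]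
          with t ht using ⟨ht.1, ht.2⟩
      have h2 : ∀ᶠ v : E in 𝓝 u, ‖v‖ < M :=
        (continuous_norm.tendsto u).eventually (Filter.Tendsto.eventually_lt_const (by simp [hM])
          tendsto_id)
      filter_upwards [Filter.prod_mem_prod h1 h2] with p hp
      obtain ⟨⟨ht0, htM⟩, hv⟩ := hp
      have hmem : x₀ + p.1 • p.2 ∈ N := by
        apply hball
        simp only [Metric.mem_ball, dist_eq_norm, add_sub_cancel_left, norm_smul,
          Real.norm_eq_abs, abs_of_pos ht0]
        calc p.1 * ‖p.2‖ ≤ p.1 * M := by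
              exact mul_le_mul_of_nonneg_left hv.le ht0.le
          _ < (ε / M) * M := by
              exact mul_lt_mul_of_pos_right htM hMpos
          _ = ε := by field_simp
      have h3 := key _ hmem
      have h4 : (0 : EReal) ≤ f (x₀ + p.1 • p.2) - f x₀ := by
        refine le_trans ?_ h3
        have : (0:ℝ) ≤ C * ‖x₀ + p.1 • p.2 - x₀‖ ^ 2 := by positivity
        exact_mod_cast this
      exact mul_nonneg (by exact_mod_cast (inv_nonneg.2 ht0.le)) h4
    exact le_liminf_of_le (by isBoundedDefault) hev
  · intro u hu
    set M : ℝ := ‖u‖ + 1 with hM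
    have hMpos : 0 < M := by positivity
    have hupos : (0:ℝ) < ‖u‖ := norm_pos_iff.2 hu
    set κ : ℝ := C * ‖u‖ ^ 2 / 2 with hκ
    have hκpos : 0 < κ := by positivity
    have hev : ∀ᶠ p : ℝ × E in (𝓝[>] (0 : ℝ)) ×ˢ 𝓝 u,
        ((κ : ℝ) : EReal) ≤ ((2 / p.1 ^ 2 : ℝ) : EReal) *
          (f (x₀ + p.1 • p.2) - f x₀ - ((p.1 * (0 : E →L[ℝ] ℝ) p.2 : ℝ) : EReal)) := by
      have h1 : ∀ᶠ t : ℝ in 𝓝[>] (0 : ℝ), 0 < t ∧ t < ε / M := by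
        filter_upwards [Ioo_mem_nhdsGT_of_mem (c := (0:ℝ)) (b := (0:ℝ)) (a := ε / M) (Set.mem_Ico.2 ⟨le_refl 0, by positivity⟩)]
          with t ht using ⟨ht.1, ht.2⟩
      have h2 : ∀ᶠ v : E in 𝓝 u, ‖v‖ < M ∧ ‖u‖ / 2 < ‖v‖ := by
        have ha : ∀ᶠ v : E in 𝓝 u, ‖v‖ < M :=
          (continuous_norm.tendsto u).eventually (Filter.Tendsto.eventually_lt_const (by simp [hM])
            tendsto_id)
        have hb : ∀ᶠ v : E in 𝓝 u, ‖u‖ / 2 < ‖v‖ :=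
          (continuous_norm.tendsto u).eventually (Filter.Tendsto.eventually_const_lt
            (by linarith) tendsto_id)
        exact ha.and hb
      filter_upwards [Filter.prod_mem_prod h1 h2] with p hp
      obtain ⟨⟨ht0, htM⟩, hv1, hv2⟩ := hp
      have hmem : x₀ + p.1 • p.2 ∈ N := by
        apply hball
        simp only [Metric.mem_ball, dist_eq_norm, add_sub_cancel_left, norm_smul,
          Real.norm_eq_abs, abs_of_pos ht0]
        calc p.1 * ‖p.2‖ ≤ p.1 * M := mul_le_mul_of_nonneg_left hv1.le ht0.le
          _ < (ε / M) * M := mul_lt_mul_of_pos_right htM hMpos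
          _ = ε := by field_simp
      have h3 := key _ hmem
      rw [add_sub_cancel_left, norm_smul, Real.norm_eq_abs, abs_of_pos ht0] at h3
      simp only [ContinuousLinearMap.zero_apply, mul_zero, EReal.coe_zero, sub_zero]
      have h5 : ((2 / p.1 ^ 2 * (C * (p.1 * ‖p.2‖) ^ 2) : ℝ) : EReal) ≤
          ((2 / p.1 ^ 2 : ℝ) : EReal) * (f (x₀ + p.1 • p.2) - f x₀) :=
        coe_mul_le_of_pos (by positivity) h3
      refine le_trans ?_ h5
      rw [EReal.coe_le_coe_iff]
      have ht0' : p.1 ≠ 0 := ht0.ne'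
      have hexp : 2 / p.1 ^ 2 * (C * (p.1 * ‖p.2‖) ^ 2) = 2 * C * ‖p.2‖ ^ 2 := by
        field_simp
      rw [hexp, hκ]
      have h6 : (‖u‖ / 2) ^ 2 ≤ ‖p.2‖ ^ 2 := by
        apply pow_le_pow_left₀ (by positivity) hv2.le
      nlinarith
    have hlim : ((κ : ℝ) : EReal) ≤ hadamardD2 f x₀ 0 u :=
      le_liminf_of_le (by isBoundedDefault) hev
    calc (0 : EReal) < ((κ : ℝ) : EReal) := by exact_mod_cast hκpos
      _ ≤ _ := hlim
end

section
/- Let E be a real finite-dimensional Euclidean space, f : E → ℝ ∪ {+∞} a proper extended real-valued function, and x̄ ∈ dom f. Suppose f⁻(x̄;u) ≥ 0 for all u ∈ E, and that for every u ≠ 0 with f⁻(x̄;u) = 0 one has f⁻²(x̄;0;u) > 0. Then x̄ is an isolated local minimizer of second order for f. -/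
open Filter Topology

/-- Auxiliary: if along a sequence tending to `F` a function is bounded by reals tending
to `0`, then its liminf over `F` is `≤ 0`. -/
lemma liminf_nonpos_of_seq {α : Type*} {F : Filter α} {Q : α → EReal} {p : ℕ → α}
    (hp : Filter.Tendsto p Filter.atTop F) {ε : ℕ → ℝ}
    (hQ : ∀ n, Q (p n) ≤ ((ε n : ℝ) : EReal))
    (hε : Filter.Tendsto ε Filter.atTop (𝓝 0)) :
    Filter.liminf Q F ≤ 0 := by
  by_contra h
  push_neg at h
  obtain ⟨c, hc0, hc⟩ := EReal.lt_iff_exists_real_btwn.1 h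
  have hc0' : (0 : ℝ) < c := by exact_mod_cast hc0
  have hev : ∀ᶠ n in Filter.atTop, ε n < c :=
    (hε.eventually (gt_mem_nhds hc0'))
  have hfreq : ∃ᶠ a in F, Q a ≤ ((c : ℝ) : EReal) := by
    apply hp.frequently
    exact (hev.mono fun n hn => le_trans (hQ n) (by exact_mod_cast hn.le)).frequently
  exact absurd (Filter.liminf_le_of_frequently_le' hfreq) (not_le.2 hc)

/-- If `f⁻(x̄;u) ≥ 0` for all `u`, and `f⁻²(x̄;0;u) > 0` for every
`u ≠ 0` with `f⁻(x̄;u) = 0`, then `x̄` is an isolated local minimizer of second order. -/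
theorem isolated_local_min_order2_sufficient
    {E : Type*} [NormedAddCommGroup E] [InnerProductSpace ℝ E] [FiniteDimensional ℝ E]
    (f : E → EReal) (hproper : (∀ x, f x ≠ ⊥) ∧ ∃ x, f x ≠ ⊤)
    (x₀ : E) (hdom : f x₀ ≠ ⊤)
    (h1 : ∀ u : E, 0 ≤ hadamardD1 f x₀ u)
    (h2 : ∀ u : E, u ≠ 0 → hadamardD1 f x₀ u = 0 → 0 < hadamardD2 f x₀ 0 u) :
    IsolatedLocalMinOrder2 f x₀ := by
  by_contra hcon
  rw [IsolatedLocalMinOrder2] at hcon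
  push_neg at hcon
  set r0 : ℝ := (f x₀).toReal with hr0_def
  have hfx0 : f x₀ = ((r0 : ℝ) : EReal) := (EReal.coe_toReal hdom (hproper.1 x₀)).symm
  -- choose the bad sequence
  set C : ℕ → ℝ := fun n => ((n : ℝ) + 1)⁻¹ with hC_def
  have hC0 : ∀ n, 0 < C n := fun n => by positivity
  have hCto : Filter.Tendsto C Filter.atTop (𝓝 0) := by
    have : Filter.Tendsto (fun n : ℕ => 1 / ((n : ℝ) + 1)) Filter.atTop (𝓝 0) :=
      tendsto_one_div_add_atTop_nhds_zero_nat
    simpa [hC_def, one_div] using this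
  have hx := fun n : ℕ =>
    hcon (C n) (hC0 n) (Metric.ball x₀ (C n)) (Metric.ball_mem_nhds _ (hC0 n))
  choose x hxball hxne hxle using hx
  set t : ℕ → ℝ := fun n => ‖x n - x₀‖ with ht_def
  have ht0 : ∀ n, 0 < t n := fun n => norm_pos_iff.2 (sub_ne_zero.2 (hxne n))
  have htC : ∀ n, t n < C n := fun n => by
    have := hxball n
    rwa [Metric.mem_ball, dist_eq_norm] at this
  have ht_to : Filter.Tendsto t Filter.atTop (𝓝 0) :=
    squeeze_zero (fun n => norm_nonneg _) (fun n => (htC n).le) hCto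
  set u : ℕ → E := fun n => (t n)⁻¹ • (x n - x₀) with hu_def
  have hu1 : ∀ n, ‖u n‖ = 1 := fun n => by
    rw [hu_def]
    simp only [norm_smul, norm_inv, Real.norm_eq_abs, abs_of_pos (ht0 n)]
    exact inv_mul_cancel₀ (ht0 n).ne'
  -- extract a convergent subsequence of directions
  obtain ⟨v, hv_mem, φ, hφ, hφt⟩ :=
    (isCompact_sphere (0 : E) 1).tendsto_subseq
      (fun n => mem_sphere_zero_iff_norm.2 (hu1 n))
  have hvnorm : ‖v‖ = 1 := mem_sphere_zero_iff_norm.1 hv_mem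
  have hvne : v ≠ 0 := by intro h; rw [h, norm_zero] at hvnorm; norm_num at hvnorm
  -- the sequence in ℝ × E tending to the product filter
  set p : ℕ → ℝ × E := fun n => (t (φ n), u (φ n)) with hp_def
  have htφ : Filter.Tendsto (fun n => t (φ n)) Filter.atTop (𝓝[>] 0) := by
    apply tendsto_nhdsWithin_of_tendsto_nhds_of_eventually_within
    · exact ht_to.comp hφ.tendsto_atTop
    · exact Filter.Eventually.of_forall fun n => ht0 (φ n)
  have hp_to : Filter.Tendsto p Filter.atTop ((𝓝[>] (0 : ℝ)) ×ˢ 𝓝 v) :=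
    htφ.prodMk hφt
  -- basic identity
  have hxeq : ∀ k, x₀ + t k • u k = x k := fun k => by
    rw [hu_def]
    simp only [smul_inv_smul₀ (ht0 k).ne']
    abel
  -- the values f (x k) are real
  have hle : ∀ k, f (x k) ≤ ((r0 + C k * t k ^ 2 : ℝ) : EReal) := fun k => by
    have := hxle k
    rw [hfx0] at this
    rw [EReal.coe_add]
    exact this
  have hfne : ∀ k, f (x k) ≠ ⊤ := fun k =>
    ((hle k).trans_lt (EReal.coe_lt_top _)).ne
  set r : ℕ → ℝ := fun k => (f (x k)).toReal with hr_def
  have hfr : ∀ k, f (x k) = ((r k : ℝ) : EReal) := fun k =>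
    (EReal.coe_toReal (hfne k) (hproper.1 (x k))).symm
  have hrle : ∀ k, r k ≤ r0 + C k * t k ^ 2 := fun k => by
    have := hle k
    rw [hfr k] at this
    exact_mod_cast this
  -- first-order bound
  have hD1le : hadamardD1 f x₀ v ≤ 0 := by
    apply liminf_nonpos_of_seq hp_to (ε := fun n => C (φ n) * t (φ n))
    · intro n
      set k := φ n
      show (((t k)⁻¹ : ℝ) : EReal) * (f (x₀ + t k • u k) - f x₀) ≤ _
      rw [hxeq k, hfr k, hfx0, ← EReal.coe_sub, ← EReal.coe_mul, EReal.coe_le_coe_iff]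
      have h1' : (t k)⁻¹ * (r k - r0) ≤ (t k)⁻¹ * (C k * t k ^ 2) := by
        apply mul_le_mul_of_nonneg_left _ (inv_nonneg.2 (ht0 k).le)
        linarith [hrle k]
      calc (t k)⁻¹ * (r k - r0) ≤ (t k)⁻¹ * (C k * t k ^ 2) := h1'
        _ = C k * t k := by field_simp [(ht0 k).ne']
    · have : Filter.Tendsto (fun n => C (φ n) * t (φ n)) Filter.atTop (𝓝 (0 * 0)) :=
        (hCto.comp hφ.tendsto_atTop).mul (ht_to.comp hφ.tendsto_atTop)
      simpa using this
  have hD1 : hadamardD1 f x₀ v = 0 := le_antisymm hD1le (h1 v)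
  have hpos := h2 v hvne hD1
  -- second-order bound
  have hD2le : hadamardD2 f x₀ 0 v ≤ 0 := by
    apply liminf_nonpos_of_seq hp_to (ε := fun n => 2 * C (φ n))
    · intro n
      set k := φ n
      show ((2 / t k ^ 2 : ℝ) : EReal) *
          (f (x₀ + t k • u k) - f x₀ - ((t k * (0 : E →L[ℝ] ℝ) (u k) : ℝ) : EReal)) ≤ _
      rw [hxeq k, hfr k, hfx0]
      simp only [ContinuousLinearMap.zero_apply, mul_zero, EReal.coe_zero, sub_zero]
      rw [← EReal.coe_sub, ← EReal.coe_mul, EReal.coe_le_coe_iff]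
      have h2pos : (0 : ℝ) < 2 / t k ^ 2 := div_pos two_pos (pow_pos (ht0 k) 2)
      calc 2 / t k ^ 2 * (r k - r0) ≤ 2 / t k ^ 2 * (C k * t k ^ 2) := by
            apply mul_le_mul_of_nonneg_left _ h2pos.le
            linarith [hrle k]
        _ = 2 * C k := by field_simp [(ht0 k).ne']
    · have : Filter.Tendsto (fun n => 2 * C (φ n)) Filter.atTop (𝓝 (2 * 0)) :=
        tendsto_const_nhds.mul (hCto.comp hφ.tendsto_atTop)
      simpa using this
  exact absurd hD2le (not_le.2 hpos)
end

section
/- Let E be a real finite-dimensional Euclidean space and f : E → ℝ ∪ {+∞} a proper extended real-valued function. Then f is second-order invex (in terms of the lower Hadamard derivatives) if and only if every second-order stationary point x̄ ∈ dom f of f is a global minimizer of f. -/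
open Filter Topology

/-- `f` is second-order invex in terms of the lower Hadamard derivatives: for every
`x̄ ∈ dom f` and `x ∈ E` with `0 ∈ ∂⁻f(x̄)` there exist `η₁, η₂`
with `f(x) − f(x̄) ≥ f⁻(x̄;η₁) + f⁻²(x̄;0;η₂)`. -/
def SecondOrderInvex {E : Type*} [NormedAddCommGroup E] [InnerProductSpace ℝ E]
    (f : E → EReal) : Prop :=
  ∀ x₀ : E, f x₀ ≠ ⊤ → ∀ x : E, (0 : E →L[ℝ] ℝ) ∈ hadamardSubdiff f x₀ →
    ∃ η₁ η₂ : E, hadamardD1 f x₀ η₁ + hadamardD2 f x₀ 0 η₂ ≤ f x - f x₀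

/-- `x̄ ∈ dom f` is a second-order stationary point:
`f⁻(x̄;u) ≥ 0` and `f⁻²(x̄;0;u) ≥ 0` for all `u`. -/
def SecondOrderStationary {E : Type*} [NormedAddCommGroup E] [InnerProductSpace ℝ E]
    (f : E → EReal) (x₀ : E) : Prop :=
  ∀ u : E, 0 ≤ hadamardD1 f x₀ u ∧ 0 ≤ hadamardD2 f x₀ 0 u


section AuxLemmas

variable {E : Type*} [NormedAddCommGroup E] [InnerProductSpace ℝ E]

private lemma fx_sub_self' {f : E → EReal} {x : E} (h1 : f x ≠ ⊤) (h2 : f x ≠ ⊥) :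
    f x - f x = 0 := by
  rw [← EReal.coe_toReal h1 h2, ← EReal.coe_sub, sub_self, EReal.coe_zero]

private lemma hadamardD1_zero_le' (f : E → EReal) (x : E) (h1 : f x ≠ ⊤) (h2 : f x ≠ ⊥) :
    hadamardD1 f x 0 ≤ 0 := by
  apply Filter.liminf_le_of_frequently_le'
  have hmap : Tendsto (fun t : ℝ => ((t, (0 : E)) : ℝ × E)) (𝓝[>] (0 : ℝ))
      ((𝓝[>] (0 : ℝ)) ×ˢ 𝓝 (0 : E)) := tendsto_id.prodMk tendsto_const_nhds
  refine Frequently.filter_mono ?_ hmap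
  rw [frequently_map]
  refine Frequently.of_forall fun t => ?_
  simp only [smul_zero, add_zero, fx_sub_self' h1 h2, mul_zero, le_refl]

private lemma hadamardD2_zero_le' (f : E → EReal) (x : E) (h1 : f x ≠ ⊤) (h2 : f x ≠ ⊥) :
    hadamardD2 f x 0 0 ≤ 0 := by
  apply Filter.liminf_le_of_frequently_le'
  have hmap : Tendsto (fun t : ℝ => ((t, (0 : E)) : ℝ × E)) (𝓝[>] (0 : ℝ))
      ((𝓝[>] (0 : ℝ)) ×ˢ 𝓝 (0 : E)) := tendsto_id.prodMk tendsto_const_nhds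
  refine Frequently.filter_mono ?_ hmap
  rw [frequently_map]
  refine Frequently.of_forall fun t => ?_
  simp only [smul_zero, add_zero, fx_sub_self' h1 h2, ContinuousLinearMap.zero_apply,
    mul_zero, EReal.coe_zero, sub_zero, le_refl]

private lemma hadamardD2_smul_le' (f : E → EReal) (x u : E) {c b : ℝ}
    (hc : 0 < c) (hb : hadamardD2 f x 0 u < (b : EReal)) :
    hadamardD2 f x 0 (c • u) ≤ ((c ^ 2 * b : ℝ) : EReal) := by
  have hfreq := Filter.frequently_lt_of_liminf_lt (u := fun p : ℝ × E =>
      ((2 / p.1 ^ 2 : ℝ) : EReal) *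
        (f (x + p.1 • p.2) - f x - ((p.1 * (0 : E →L[ℝ] ℝ) p.2 : ℝ) : EReal)))
      (f := (𝓝[>] (0 : ℝ)) ×ˢ 𝓝 u) (b := (b : EReal)) (by isBoundedDefault) hb
  have hpos : ∀ᶠ p : ℝ × E in (𝓝[>] (0 : ℝ)) ×ˢ 𝓝 u, 0 < p.1 :=
    Filter.Eventually.prod_inl self_mem_nhdsWithin _
  have hfreq2 := hfreq.and_eventually hpos
  apply Filter.liminf_le_of_frequently_le'
  have hmap : Tendsto (fun p : ℝ × E => ((p.1 / c, c • p.2) : ℝ × E))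
      ((𝓝[>] (0 : ℝ)) ×ˢ 𝓝 u) ((𝓝[>] (0 : ℝ)) ×ˢ 𝓝 (c • u)) := by
    have h2 : Tendsto (fun v : E => c • v) (𝓝 u) (𝓝 (c • u)) :=
      (tendsto_id (x := 𝓝 u)).const_smul c
    have h1 : Tendsto (fun t : ℝ => t / c) (𝓝[>] (0 : ℝ)) (𝓝[>] (0 : ℝ)) := by
      refine tendsto_nhdsWithin_of_tendsto_nhds_of_eventually_within _ ?_ ?_
      · have := ((tendsto_id (x := 𝓝 (0:ℝ))).div_const c).mono_left
          (nhdsWithin_le_nhds (s := Set.Ioi (0:ℝ)))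
        simpa using this
      · filter_upwards [self_mem_nhdsWithin] with t ht
        exact div_pos ht hc
    exact h1.prodMap h2
  refine Frequently.filter_mono ?_ hmap
  rw [frequently_map]
  refine hfreq2.mono ?_
  rintro ⟨t, v⟩ ⟨hlt, ht⟩
  simp only [ContinuousLinearMap.zero_apply, mul_zero, EReal.coe_zero, sub_zero] at hlt ⊢
  have hsmul : (t / c) • (c • v) = t • v := by
    rw [smul_smul, div_mul_cancel₀ _ hc.ne']
  rw [hsmul]
  have hcoef : (2 / (t / c) ^ 2 : ℝ) = c ^ 2 * (2 / t ^ 2) := by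
    field_simp
  rw [hcoef, EReal.coe_mul, mul_assoc]
  calc ((c ^ 2 : ℝ) : EReal) * (((2 / t ^ 2 : ℝ) : EReal) * (f (x + t • v) - f x))
      ≤ ((c ^ 2 : ℝ) : EReal) * (b : EReal) :=
        mul_le_mul_of_nonneg_left hlt.le (by exact_mod_cast sq_nonneg c)
    _ = ((c ^ 2 * b : ℝ) : EReal) := by rw [EReal.coe_mul]

end AuxLemmas

/-- A proper extended real-valued function is second-order invex if and
only if every second-order stationary point `x̄ ∈ dom f` is a global minimizer of `f`. -/
theorem secondOrderInvex_iff_stationary_global_min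
    {E : Type*} [NormedAddCommGroup E] [InnerProductSpace ℝ E] [FiniteDimensional ℝ E]
    (f : E → EReal) (hproper : (∀ x, f x ≠ ⊥) ∧ ∃ x, f x ≠ ⊤) :
    SecondOrderInvex f ↔
      ∀ x₀ : E, f x₀ ≠ ⊤ → SecondOrderStationary f x₀ → ∀ x : E, f x₀ ≤ f x := by
  obtain ⟨hbot, -⟩ := hproper
  constructor
  · intro hinv x₀ hx₀ hst x
    have h0 : (0 : E →L[ℝ] ℝ) ∈ hadamardSubdiff f x₀ := by
      intro u
      simpa using (hst u).1
    obtain ⟨η₁, η₂, hsum⟩ := hinv x₀ hx₀ x h0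
    have h0le : (0 : EReal) ≤ f x - f x₀ := by
      refine le_trans ?_ hsum
      have := add_le_add (hst η₁).1 (hst η₂).2
      simpa using this
    rw [EReal.le_sub_iff_add_le (Or.inl (hbot x₀)) (Or.inl hx₀)] at h0le
    simpa using h0le
  · intro hmin x₀ hx₀ x h0
    have hD1zero : hadamardD1 f x₀ 0 = 0 := by
      refine le_antisymm (hadamardD1_zero_le' f x₀ hx₀ (hbot x₀)) ?_
      simpa using h0 0
    by_cases hstat : ∀ u : E, 0 ≤ hadamardD2 f x₀ 0 u
    · have hst : SecondOrderStationary f x₀ := fun u => ⟨by simpa using h0 u, hstat u⟩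
      have hle := hmin x₀ hx₀ hst x
      refine ⟨0, 0, ?_⟩
      have h1 : hadamardD1 f x₀ 0 + hadamardD2 f x₀ 0 0 ≤ 0 := by
        have := add_le_add (hadamardD1_zero_le' f x₀ hx₀ (hbot x₀))
          (hadamardD2_zero_le' f x₀ hx₀ (hbot x₀))
        simpa using this
      refine h1.trans ?_
      rw [EReal.le_sub_iff_add_le (Or.inl (hbot x₀)) (Or.inl hx₀)]
      simpa using hle
    · push_neg at hstat
      obtain ⟨u, hu⟩ := hstat
      have hne : f x - f x₀ ≠ ⊥ := by
        rw [sub_eq_add_neg]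
        simp [EReal.add_eq_bot_iff, hbot x, hx₀]
      set M : ℝ := (f x - f x₀).toReal with hM
      have hMle : (M : EReal) ≤ f x - f x₀ := by
        rcases eq_or_ne (f x - f x₀) ⊤ with h | h
        · rw [h]; exact le_top
        · rw [hM, EReal.coe_toReal h hne]
      obtain ⟨b, hb1, hb2⟩ := EReal.exists_between_coe_real hu
      have hbneg : b < 0 := by exact_mod_cast hb2
      set c : ℝ := Real.sqrt (max (M / b) 1) with hc
      have hcpos : 0 < c := Real.sqrt_pos.2 (lt_max_of_lt_right one_pos)
      have hcsq : c ^ 2 = max (M / b) 1 :=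
        Real.sq_sqrt (le_max_of_le_right zero_le_one)
      have hkey : c ^ 2 * b ≤ M := by
        have h1 : M / b ≤ c ^ 2 := hcsq ▸ le_max_left _ _
        have := mul_le_mul_of_nonpos_right h1 hbneg.le
        rwa [div_mul_cancel₀ _ hbneg.ne] at this
      refine ⟨0, c • u, ?_⟩
      rw [hD1zero, zero_add]
      calc hadamardD2 f x₀ 0 (c • u) ≤ ((c ^ 2 * b : ℝ) : EReal) :=
            hadamardD2_smul_le' f x₀ u hcpos hb1
        _ ≤ (M : EReal) := by exact_mod_cast hkey
        _ ≤ f x - f x₀ := hMle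
end

section
/- Let E be a real finite-dimensional Euclidean space and f : E → ℝ ∪ {+∞} a proper extended real-valued function that is invex in terms of the lower Hadamard directional derivative. Then f is second-order invex in terms of the lower Hadamard derivatives. -/
open Filter Topology

/-- `f` is invex in terms of the lower Hadamard directional derivative: there is a map
`η : E × E → E` with `f(y) − f(x) ≥ f⁻(x;η(x,y))` for all `x ∈ dom f` and `y ∈ E`. -/
def InvexHadamard {E : Type*} [NormedAddCommGroup E] [InnerProductSpace ℝ E]
    (f : E → EReal) : Prop :=
  ∃ η : E × E → E, ∀ x : E, f x ≠ ⊤ → ∀ y : E, hadamardD1 f x (η (x, y)) ≤ f y - f x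

/-- Every invex (in terms of the lower Hadamard directional derivative)
proper extended real-valued function is second-order invex. -/
theorem invex_implies_secondOrderInvex
    {E : Type*} [NormedAddCommGroup E] [InnerProductSpace ℝ E] [FiniteDimensional ℝ E]
    (f : E → EReal) (hproper : (∀ x, f x ≠ ⊥) ∧ ∃ x, f x ≠ ⊤)
    (hinvex : InvexHadamard f) :
    SecondOrderInvex f := by
  obtain ⟨η, hη⟩ := hinvex
  intro x₀ hx₀ x _hsub
  refine ⟨η (x₀, x), 0, ?_⟩
  have hD2 : hadamardD2 f x₀ 0 0 ≤ 0 := by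
    unfold hadamardD2
    set g := fun p : ℝ × E =>
        ((2 / p.1 ^ 2 : ℝ) : EReal) *
          (f (x₀ + p.1 • p.2) - f x₀ - ((p.1 * (0 : E →L[ℝ] ℝ) p.2 : ℝ) : EReal))
    have hle : (𝓝[>] (0 : ℝ)) ×ˢ (pure (0 : E)) ≤ (𝓝[>] (0 : ℝ)) ×ˢ 𝓝 (0 : E) :=
      Filter.prod_mono le_rfl (pure_le_nhds 0)
    have h1 : Filter.liminf g ((𝓝[>] (0 : ℝ)) ×ˢ 𝓝 (0 : E)) ≤
        Filter.liminf g ((𝓝[>] (0 : ℝ)) ×ˢ (pure (0 : E))) :=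
      Filter.liminf_le_liminf_of_le hle
    have hev : ∀ᶠ p in (𝓝[>] (0 : ℝ)) ×ˢ (pure (0 : E)), g p = 0 := by
      have h0 : ∀ᶠ y in (pure (0 : E)), y = (0 : E) := eventually_pure.2 rfl
      filter_upwards [h0.prod_inr (𝓝[>] (0 : ℝ))] with p hp
      simp only [g, hp, smul_zero, add_zero, ContinuousLinearMap.zero_apply, mul_zero,
        EReal.coe_zero, sub_zero]
      rw [← EReal.coe_toReal hx₀ (hproper.1 x₀), ← EReal.coe_sub, sub_self, EReal.coe_zero,
        mul_zero]
    have h2 : Filter.liminf g ((𝓝[>] (0 : ℝ)) ×ˢ (pure (0 : E))) = 0 := by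
      rw [liminf_congr hev, liminf_const]
    exact h1.trans h2.le
  calc hadamardD1 f x₀ (η (x₀, x)) + hadamardD2 f x₀ 0 0
      ≤ hadamardD1 f x₀ (η (x₀, x)) + 0 := add_le_add_right hD2 _
    _ = hadamardD1 f x₀ (η (x₀, x)) := add_zero _
    _ ≤ f x - f x₀ := hη x₀ hx₀ x
end

section
/- Let φ : [a,b] → ℝ be a lower semicontinuous function of one real variable, where a < b. Then there exists ξ with a < ξ ≤ b such that φ(a) − φ(b) ≤ φ'_D(ξ; a−b), where φ'_D(ξ; a−b) := liminf_{t↓0} (φ(ξ + t(a−b)) − φ(ξ))/t is the lower Dini directional derivative of φ at ξ in direction a−b (note ξ + t(a−b) ∈ [a,b] for all sufficiently small t > 0). -/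
open Filter Topology

/-- A lower semicontinuous function on `Icc a b` has closed sublevel sets within `Icc a b`. -/
lemma lsc_sublevel_closed (f : ℝ → ℝ) (a b : ℝ)
    (h : LowerSemicontinuousOn f (Set.Icc a b)) (c : ℝ) :
    IsClosed {x ∈ Set.Icc a b | f x ≤ c} := by
  have hsub : {x ∈ Set.Icc a b | f x ≤ c} ⊆ Set.Icc a b := fun x hx => hx.1
  refine isClosed_of_closure_subset fun x hx => ?_
  have hxI : x ∈ Set.Icc a b :=
    isClosed_Icc.closure_subset ((closure_mono hsub) hx)
  refine ⟨hxI, ?_⟩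
  by_contra hfc
  push_neg at hfc
  have hev : ∀ᶠ y in 𝓝[Set.Icc a b] x, c < f y := h x hxI c hfc
  have hNe : (𝓝[{x ∈ Set.Icc a b | f x ≤ c}] x).NeBot :=
    mem_closure_iff_nhdsWithin_neBot.mp hx
  have hle : 𝓝[{x ∈ Set.Icc a b | f x ≤ c}] x ≤ 𝓝[Set.Icc a b] x :=
    nhdsWithin_mono x hsub
  have hev' : ∀ᶠ y in 𝓝[{x ∈ Set.Icc a b | f x ≤ c}] x, c < f y := hle hev
  have hmem : ∀ᶠ y in 𝓝[{x ∈ Set.Icc a b | f x ≤ c}] x,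
      y ∈ {x ∈ Set.Icc a b | f x ≤ c} := eventually_mem_nhdsWithin
  obtain ⟨y, hy1, hy2⟩ := (hev'.and hmem).exists
  exact absurd hy2.2 (not_le.mpr hy1)

/-- A lower semicontinuous function on a nonempty compact interval attains its minimum. -/
lemma lsc_exists_min (f : ℝ → ℝ) (a b : ℝ) (hab : a ≤ b)
    (h : LowerSemicontinuousOn f (Set.Icc a b)) :
    ∃ x ∈ Set.Icc a b, ∀ y ∈ Set.Icc a b, f x ≤ f y := by
  have hne : (Set.Icc a b).Nonempty := Set.nonempty_Icc.mpr hab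
  haveI : Nonempty (Set.Icc a b) := hne.to_subtype
  set K : Set.Icc a b → Set ℝ := fun y => {x ∈ Set.Icc a b | f x ≤ f y.1} with hK
  have hcl : ∀ y, IsClosed (K y) := fun y => lsc_sublevel_closed f a b h (f y.1)
  have hcp : ∀ y, IsCompact (K y) := fun y =>
    isCompact_Icc.of_isClosed_subset (hcl y) fun x hx => hx.1
  have hnn : ∀ y, (K y).Nonempty := fun y => ⟨y.1, y.2, le_refl _⟩
  have hdir : Directed (· ⊇ ·) K := by
    intro y z
    rcases le_total (f y.1) (f z.1) with hyz | hzy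
    · exact ⟨y, fun x hx => hx, fun x hx => ⟨hx.1, hx.2.trans hyz⟩⟩
    · exact ⟨z, fun x hx => ⟨hx.1, hx.2.trans hzy⟩, fun x hx => hx⟩
  obtain ⟨x, hx⟩ := IsCompact.nonempty_iInter_of_directed_nonempty_isCompact_isClosed
    K hdir hnn hcp hcl
  simp only [Set.mem_iInter] at hx
  refine ⟨x, (hx ⟨a, Set.left_mem_Icc.mpr hab⟩).1, fun y hy => (hx ⟨y, hy⟩).2⟩

/-- The lower Dini directional derivative of a function `φ` of one real variable at `ξ`
in direction `d`: `φ'_D(ξ;d) = liminf_{t↓0} (φ(ξ+td) − φ(ξ))/t`, valued in `EReal`. -/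
noncomputable def diniD1Real (φ : ℝ → ℝ) (ξ d : ℝ) : EReal :=
  Filter.liminf (fun t : ℝ => (((φ (ξ + t * d) - φ ξ) / t : ℝ) : EReal)) (𝓝[>] (0 : ℝ))

/-- **Diewert's mean value theorem.** If `φ : [a,b] → ℝ` is lower
semicontinuous and `a < b`, then there is `ξ` with `a < ξ ≤ b` such that
`φ(a) − φ(b) ≤ φ'_D(ξ; a−b)`. -/
theorem diewert_mean_value (φ : ℝ → ℝ) (a b : ℝ) (hab : a < b)
    (hlsc : LowerSemicontinuousOn φ (Set.Icc a b)) :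
    ∃ ξ : ℝ, a < ξ ∧ ξ ≤ b ∧ ((φ a - φ b : ℝ) : EReal) ≤ diniD1Real φ ξ (a - b) := by
  have hba : (0:ℝ) < b - a := by linarith
  set c : ℝ := (φ a - φ b) / (b - a) with hc
  set ψ : ℝ → ℝ := fun x => φ x + c * x with hψ
  have hψlsc : LowerSemicontinuousOn ψ (Set.Icc a b) :=
    hlsc.add ((continuousOn_const.mul continuousOn_id).lowerSemicontinuousOn)
  obtain ⟨ξ₀, hξ₀mem, hξ₀min⟩ := lsc_exists_min ψ a b hab.le hψlsc
  -- ψ a = ψ b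
  have hψab : ψ a = ψ b := by
    simp only [hψ, hc]
    field_simp
    ring
  -- choose ξ
  have key : ∃ ξ, a < ξ ∧ ξ ≤ b ∧ ∀ y ∈ Set.Icc a b, ψ ξ ≤ ψ y := by
    rcases eq_or_lt_of_le hξ₀mem.1 with heq | hlt
    · refine ⟨b, hab, le_refl b, fun y hy => ?_⟩
      rw [← hψab, heq]; exact hξ₀min y hy
    · exact ⟨ξ₀, hlt, hξ₀mem.2, hξ₀min⟩
  obtain ⟨ξ, hξa, hξb, hξmin⟩ := key
  refine ⟨ξ, hξa, hξb, ?_⟩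
  rw [diniD1Real]
  refine Filter.le_liminf_of_le (by isBoundedDefault) ?_
  have hev : Set.Ioo (0:ℝ) ((ξ - a) / (b - a)) ∈ 𝓝[>] (0:ℝ) :=
    Ioo_mem_nhdsGT_of_mem ⟨le_refl 0, div_pos (by linarith) hba⟩
  filter_upwards [hev] with t ht
  have ht0 : 0 < t := ht.1
  have htb : t * (b - a) < ξ - a := by
    calc t * (b - a) < (ξ - a) / (b - a) * (b - a) := by
          apply mul_lt_mul_of_pos_right ht.2 hba
      _ = ξ - a := by field_simp
  have hmem : ξ + t * (a - b) ∈ Set.Icc a b := by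
    constructor
    · nlinarith
    · nlinarith
  have hψle : ψ ξ ≤ ψ (ξ + t * (a - b)) := hξmin _ hmem
  have hquot : φ a - φ b ≤ (φ (ξ + t * (a - b)) - φ ξ) / t := by
    rw [le_div_iff₀ ht0]
    have : φ ξ + c * ξ ≤ φ (ξ + t * (a - b)) + c * (ξ + t * (a - b)) := hψle
    have hc' : c * (b - a) = φ a - φ b := by
      rw [hc]; field_simp
    nlinarith [this]
  exact_mod_cast hquot
end

section
/- Let E be a real finite-dimensional Euclidean space and f : E → ℝ be radially lower semicontinuous on some neighborhood of x ∈ E (i.e., lower semicontinuous along line segments in that neighborhood) and l-stable at x. Suppose the lower Dini directional derivative satisfies f'_D(x;u) = 0 for all u ∈ E. Then for every h ∈ E the limit lim_{t↓0, h'→h} (f(x + t h') − f(x + t h))/t² exists and equals 0. -/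
open Filter Topology

/-- The lower Dini directional derivative
`f'_D(x;u) = liminf_{t↓0} (f(x+tu) − f(x))/t`, valued in `EReal`. -/
noncomputable def diniD1 {E : Type*} [NormedAddCommGroup E] [InnerProductSpace ℝ E]
    (f : E → ℝ) (x u : E) : EReal :=
  Filter.liminf (fun t : ℝ => (((f (x + t • u) - f x) / t : ℝ) : EReal)) (𝓝[>] (0 : ℝ))

/-- `f` is `l`-stable at `x`: there are a neighborhood `U` of `x` and a constant `K > 0`
such that the lower Dini derivatives `f'_D(y;u)`, `f'_D(x;u)` are finite and satisfy
`|f'_D(y;u) − f'_D(x;u)| ≤ K‖y−x‖‖u‖` for all `y ∈ U`, `u ∈ E`. -/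
def LStableAt {E : Type*} [NormedAddCommGroup E] [InnerProductSpace ℝ E]
    (f : E → ℝ) (x : E) : Prop :=
  ∃ U ∈ 𝓝 x, ∃ K : ℝ, 0 < K ∧ ∀ y ∈ U, ∀ u : E,
    ∃ dy dx : ℝ, diniD1 f y u = (dy : EReal) ∧ diniD1 f x u = (dx : EReal) ∧
      |dy - dx| ≤ K * ‖y - x‖ * ‖u‖

/-- Increment bound for a lower semicontinuous function whose lower right Dini
quotients are frequently bounded by `M`. -/
lemma keyA {g : ℝ → ℝ} {S : Set ℝ} (hS : Set.Icc (0:ℝ) 1 ⊆ S)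
    (hlsc : LowerSemicontinuousOn g S) {M : ℝ}
    (hd : ∀ s ∈ Set.Ico (0:ℝ) 1, ∃ᶠ τ in 𝓝[>] (0:ℝ), g (s+τ) ≤ g s + M*τ) :
    g 1 ≤ g 0 + M := by
  set A : Set ℝ := {s | s ∈ Set.Icc (0:ℝ) 1 ∧ g s ≤ g 0 + M * s} with hA
  have h0A : (0:ℝ) ∈ A := ⟨⟨le_refl 0, zero_le_one⟩, by simp⟩
  have hne : A.Nonempty := ⟨0, h0A⟩
  have hbdd : BddAbove A := ⟨1, fun s hs => hs.1.2⟩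
  set c := sSup A with hc
  have hc0 : 0 ≤ c := le_csSup hbdd h0A
  have hc1 : c ≤ 1 := csSup_le hne fun s hs => hs.1.2
  have hcc : c ∈ closure A := csSup_mem_closure hne hbdd
  have hAS : A ⊆ S := fun s hs => hS hs.1
  have hnb : (𝓝[A] c).NeBot := mem_closure_iff_nhdsWithin_neBot.1 hcc
  have hgc : g c ≤ g 0 + M * c := by
    by_contra hlt
    push_neg at hlt
    set lam : ℝ := (g 0 + M * c + g c) / 2 with hlam
    have h1 : g 0 + M * c < lam := by rw [hlam]; linarith
    have h2 : lam < g c := by rw [hlam]; linarith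
    have e1 : ∀ᶠ s in 𝓝[A] c, lam < g s := by
      have := hlsc c (hS ⟨hc0, hc1⟩) lam h2
      exact nhdsWithin_mono c hAS this
    have e2 : ∀ᶠ s in 𝓝[A] c, g 0 + M * s < lam := by
      have hcont : ContinuousAt (fun s : ℝ => g 0 + M * s) c := by fun_prop
      have := hcont.eventually_lt_const (by simpa using h1)
      exact this.filter_mono nhdsWithin_le_nhds
    have e3 : ∀ᶠ s in 𝓝[A] c, s ∈ A := self_mem_nhdsWithin
    obtain ⟨s, hs1, hs2, hs3⟩ := (e1.and (e2.and e3)).exists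
    exact absurd hs3.2 (by linarith)
  rcases eq_or_lt_of_le hc1 with hceq | hclt
  · have := hgc
    rw [hceq] at this
    linarith
  · exfalso
    have hfreq := hd c ⟨hc0, hclt⟩
    have hev : ∀ᶠ τ in 𝓝[>] (0:ℝ), τ < 1 - c ∧ 0 < τ := by
      filter_upwards [Ioo_mem_nhdsGT_of_mem
        (by constructor <;> simp [hclt] : (0:ℝ) ∈ Set.Ico 0 (1-c))] with τ hτ
      exact ⟨hτ.2, hτ.1⟩
    obtain ⟨τ, hgτ, hτ1, hτ0⟩ := (hfreq.and_eventually hev).exists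
    have hmem : c + τ ∈ A := by
      refine ⟨⟨by linarith, by linarith⟩, ?_⟩
      calc g (c + τ) ≤ g c + M * τ := hgτ
        _ ≤ g 0 + M * c + M * τ := by linarith
        _ = g 0 + M * (c + τ) := by ring
    have := le_csSup hbdd hmem
    linarith

/-- From a finite Dini derivative value `< M` get frequent increment bounds. -/
lemma dini_frequently {E : Type*} [NormedAddCommGroup E] [InnerProductSpace ℝ E]
    {f : E → ℝ} {y u : E} {d : ℝ} (hdy : diniD1 f y u = (d : EReal))
    {M : ℝ} (hM : d < M) :
    ∃ᶠ τ in 𝓝[>] (0:ℝ), f (y + τ • u) ≤ f y + M * τ := by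
  have hlim : Filter.liminf
      (fun t : ℝ => (((f (y + t • u) - f y) / t : ℝ) : EReal)) (𝓝[>] (0:ℝ)) < (M : EReal) := by
    rw [show Filter.liminf
      (fun t : ℝ => (((f (y + t • u) - f y) / t : ℝ) : EReal)) (𝓝[>] (0:ℝ)) = diniD1 f y u
      from rfl, hdy]
    exact_mod_cast hM
  have hfreq := Filter.frequently_lt_of_liminf_lt (by isBoundedDefault) hlim
  have hev : ∀ᶠ τ in 𝓝[>] (0:ℝ), (0:ℝ) < τ := self_mem_nhdsWithin
  refine ((hfreq.and_eventually hev).mono ?_)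
  rintro τ ⟨hlt, hτ0⟩
  have hlt' : (f (y + τ • u) - f y) / τ < M := by exact_mod_cast hlt
  have := (div_lt_iff₀ hτ0).1 hlt'
  linarith

/-- Version of `keyA` with strict slack. -/
lemma keyB {g : ℝ → ℝ} {S : Set ℝ} (hS : Set.Icc (0:ℝ) 1 ⊆ S)
    (hlsc : LowerSemicontinuousOn g S) {C : ℝ}
    (hd : ∀ s ∈ Set.Ico (0:ℝ) 1, ∀ M, C < M → ∃ᶠ τ in 𝓝[>] (0:ℝ), g (s+τ) ≤ g s + M*τ) :
    g 1 ≤ g 0 + C := by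
  by_contra hlt
  push_neg at hlt
  set ε := (g 1 - g 0 - C)/2 with hε'
  have hε : 0 < ε := by rw [hε']; linarith
  have := keyA hS hlsc (M := C + ε) (fun s hs => hd s hs _ (by linarith))
  rw [hε'] at this
  linarith

/-- If `f : E → ℝ` is radially lower semicontinuous on some neighborhood
of `x` (lower semicontinuous along line segments in that neighborhood), `l`-stable at `x`,
and `f'_D(x;u) = 0` for all `u`, then for every `h ∈ E` the limit
`lim_{t↓0, h'→h} (f(x + t h') − f(x + t h))/t²` exists and equals `0`. -/
theorem lstable_radial_limit_zero
    {E : Type*} [NormedAddCommGroup E] [InnerProductSpace ℝ E] [FiniteDimensional ℝ E]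
    (f : E → ℝ) (x : E)
    (hrlsc : ∃ U ∈ 𝓝 x, ∀ y ∈ U, ∀ d : E,
      LowerSemicontinuousOn (fun s : ℝ => f (y + s • d)) {s : ℝ | y + s • d ∈ U})
    (hstab : LStableAt f x)
    (hdini : ∀ u : E, diniD1 f x u = 0) :
    ∀ h : E, Filter.Tendsto
      (fun p : ℝ × E => (f (x + p.1 • p.2) - f (x + p.1 • h)) / p.1 ^ 2)
      ((𝓝[>] (0 : ℝ)) ×ˢ 𝓝 h) (𝓝 0) := by
  intro h
  obtain ⟨U, hU, hUlsc⟩ := hrlsc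
  obtain ⟨U', hU', K, hK, hstab'⟩ := hstab
  obtain ⟨r, hr, hball⟩ := Metric.mem_nhds_iff.1 (Filter.inter_mem hU hU')
  -- one-sided estimate along segments in the ball
  have key : ∀ (y0 d : E) (ρ : ℝ),
      (∀ s : ℝ, s ∈ Set.Icc (0:ℝ) 1 →
        y0 + s • d ∈ Metric.ball x r ∧ ‖y0 + s • d - x‖ ≤ ρ) →
      f (y0 + d) ≤ f y0 + K * ρ * ‖d‖ := by
    intro y0 d ρ hseg
    have hy0U : y0 ∈ U := by
      have h0 := (hseg 0 ⟨le_refl 0, zero_le_one⟩).1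
      rw [zero_smul, add_zero] at h0
      exact (hball h0).1
    have hS : Set.Icc (0:ℝ) 1 ⊆ {s : ℝ | y0 + s • d ∈ U} :=
      fun s hs => (hball (hseg s hs).1).1
    have hlsc := hUlsc y0 hy0U d
    have h01 : f (y0 + (1:ℝ) • d) ≤ f (y0 + (0:ℝ) • d) + K * ρ * ‖d‖ := by
      refine keyB hS hlsc ?_
      intro s hs M hM
      have hmem := hseg s ⟨hs.1, hs.2.le⟩
      have hysU' : y0 + s • d ∈ U' := (hball hmem.1).2
      obtain ⟨dy, dx, hdy, hdx, hbd⟩ := hstab' (y0 + s • d) hysU' d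
      have hdx0 : dx = 0 := by
        have h0 : (dx : EReal) = ((0:ℝ) : EReal) := by
          rw [← hdx, hdini d]; simp
        exact_mod_cast h0
      rw [hdx0, sub_zero] at hbd
      have hρ0 : 0 ≤ ρ := le_trans (norm_nonneg _) hmem.2
      have hdyM : dy < M := by
        have h1 : dy ≤ K * ‖y0 + s • d - x‖ * ‖d‖ := le_trans (le_abs_self _) hbd
        have h2 : K * ‖y0 + s • d - x‖ * ‖d‖ ≤ K * ρ * ‖d‖ := by
          apply mul_le_mul_of_nonneg_right _ (norm_nonneg d)
          exact mul_le_mul_of_nonneg_left hmem.2 hK.le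
        linarith
      have hfr := dini_frequently hdy hdyM
      refine hfr.mono ?_
      intro τ hτ
      have heq : y0 + s • d + τ • d = y0 + (s + τ) • d := by
        rw [add_smul]; abel
      rw [← heq]
      exact hτ
    rw [one_smul, zero_smul, add_zero] at h01
    exact h01
  -- eventual bound
  have hC : (0:ℝ) < ‖h‖ + 2 := by positivity
  have ht0 : (0:ℝ) < r / (‖h‖ + 2) := div_pos hr hC
  have hevset : Set.Ioo (0:ℝ) (r / (‖h‖ + 2)) ×ˢ Metric.ball h 1 ∈
      (𝓝[>] (0:ℝ)) ×ˢ 𝓝 h :=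
    Filter.prod_mem_prod (Ioo_mem_nhdsGT_of_mem ⟨le_refl 0, ht0⟩)
      (Metric.ball_mem_nhds h one_pos)
  have hbound : ∀ᶠ p : ℝ × E in (𝓝[>] (0:ℝ)) ×ˢ 𝓝 h,
      ‖(f (x + p.1 • p.2) - f (x + p.1 • h)) / p.1 ^ 2‖ ≤ K * (‖h‖ + 2) * ‖p.2 - h‖ := by
    filter_upwards [hevset]
    rintro ⟨t, h'⟩ ⟨ht, hh'⟩
    simp only [Set.mem_Ioo] at ht
    have ht0' : 0 < t := ht.1
    have htr : t * (‖h‖ + 2) < r := by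
      have := (lt_div_iff₀ hC).1 ht.2
      linarith
    have hh'1 : ‖h' - h‖ < 1 := by
      rw [Metric.mem_ball, dist_eq_norm] at hh'; exact hh'
    have hnh' : ‖h'‖ ≤ ‖h‖ + 1 := by
      have := norm_le_insert' h' h
      linarith
    set ρ : ℝ := t * (‖h‖ + 2) with hρdef
    -- segment condition helper
    have hsegbound : ∀ (a b : E), ‖a‖ ≤ ‖h‖ + 1 → ‖b‖ ≤ 1 → ∀ s : ℝ, s ∈ Set.Icc (0:ℝ) 1 →
        (x + t • a) + s • (t • b) ∈ Metric.ball x r ∧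
        ‖(x + t • a) + s • (t • b) - x‖ ≤ ρ := by
      intro a b ha hb s hsI
      have hnorm : ‖(x + t • a) + s • (t • b) - x‖ ≤ ρ := by
        have heq : (x + t • a) + s • (t • b) - x = t • a + s • (t • b) := by abel
        rw [heq]
        calc ‖t • a + s • (t • b)‖ ≤ ‖t • a‖ + ‖s • (t • b)‖ := norm_add_le _ _
          _ = |t| * ‖a‖ + |s| * (|t| * ‖b‖) := by rw [norm_smul, norm_smul, norm_smul]; simp [Real.norm_eq_abs]
          _ = t * ‖a‖ + s * (t * ‖b‖) := by
              rw [abs_of_pos ht0', abs_of_nonneg hsI.1]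
          _ ≤ t * (‖h‖ + 1) + 1 * (t * 1) := by
              have h1 : t * ‖a‖ ≤ t * (‖h‖ + 1) := mul_le_mul_of_nonneg_left ha ht0'.le
              have h2 : s * (t * ‖b‖) ≤ 1 * (t * 1) := by
                apply mul_le_mul hsI.2 _ (by positivity) zero_le_one
                exact mul_le_mul_of_nonneg_left hb ht0'.le
              linarith
          _ = ρ := by rw [hρdef]; ring
      refine ⟨?_, hnorm⟩
      rw [Metric.mem_ball, dist_eq_norm]
      exact lt_of_le_of_lt hnorm htr
    -- first direction
    have k1 : f (x + t • h + t • (h' - h)) ≤ f (x + t • h) + K * ρ * ‖t • (h' - h)‖ :=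
      key (x + t • h) (t • (h' - h)) ρ
        (hsegbound h (h' - h) (by linarith [norm_nonneg h]) hh'1.le)
    have k2 : f (x + t • h' + t • (h - h')) ≤ f (x + t • h') + K * ρ * ‖t • (h - h')‖ :=
      key (x + t • h') (t • (h - h')) ρ
        (hsegbound h' (h - h') hnh' (by rw [norm_sub_rev]; exact hh'1.le))
    have e1 : x + t • h + t • (h' - h) = x + t • h' := by rw [smul_sub]; abel
    have e2 : x + t • h' + t • (h - h') = x + t • h := by rw [smul_sub]; abel
    rw [e1] at k1
    rw [e2] at k2
    have hns : ‖t • (h' - h)‖ = t * ‖h' - h‖ := by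
      rw [norm_smul, Real.norm_eq_abs, abs_of_pos ht0']
    have hns2 : ‖t • (h - h')‖ = t * ‖h' - h‖ := by
      rw [norm_smul, Real.norm_eq_abs, abs_of_pos ht0', norm_sub_rev]
    rw [hns] at k1
    rw [hns2] at k2
    have habs : |f (x + t • h') - f (x + t • h)| ≤ (K * (‖h‖ + 2) * ‖h' - h‖) * t ^ 2 := by
      rw [abs_le]
      constructor
      · have : K * ρ * (t * ‖h' - h‖) = (K * (‖h‖ + 2) * ‖h' - h‖) * t ^ 2 := by
          rw [hρdef]; ring
        rw [this] at k2
        linarith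
      · have : K * ρ * (t * ‖h' - h‖) = (K * (‖h‖ + 2) * ‖h' - h‖) * t ^ 2 := by
          rw [hρdef]; ring
        rw [this] at k1
        linarith
    have ht2 : (0:ℝ) < t ^ 2 := by positivity
    rw [Real.norm_eq_abs, abs_div, abs_of_pos ht2, div_le_iff₀ ht2]
    exact habs
  have hlim : Filter.Tendsto (fun p : ℝ × E => K * (‖h‖ + 2) * ‖p.2 - h‖)
      ((𝓝[>] (0:ℝ)) ×ˢ 𝓝 h) (𝓝 0) := by
    have h2 : Filter.Tendsto (fun y : E => K * (‖h‖ + 2) * ‖y - h‖) (𝓝 h)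
        (𝓝 (K * (‖h‖ + 2) * ‖h - h‖)) := by
      apply Continuous.tendsto
      fun_prop
    have h3 := h2.comp (Filter.tendsto_snd (f := 𝓝[>] (0:ℝ)))
    simpa [Function.comp_def] using h3
  exact squeeze_zero_norm' hbound hlim
end

section
/- Let E be a real finite-dimensional Euclidean space and f : E → ℝ be continuous on some neighborhood of x̄ ∈ E, l-stable at x̄, and Fréchet differentiable at x̄ (differentiability at x̄ follows from continuity near x̄ and l-stability at x̄). Suppose f is strongly pseudoconvex at the point x̄ in the Dini sense. Then x̄ is an isolated local minimizer of second order for f if and only if ∇f(x̄) = 0. -/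
open Filter Topology

/-- If `f` has Fréchet derivative `0` at `x₀`, all lower Dini derivatives vanish. -/
lemma diniD1_eq_zero_of_hasFDerivAt_zero {E : Type*} [NormedAddCommGroup E]
    [InnerProductSpace ℝ E] {f : E → ℝ} {x₀ : E}
    (hdiff : HasFDerivAt f (0 : E →L[ℝ] ℝ) x₀) (u : E) : diniD1 f x₀ u = 0 := by
  have hline : HasDerivAt (fun t : ℝ => x₀ + t • u) u 0 := by
    simpa using ((hasDerivAt_id (0:ℝ)).smul_const u).const_add x₀
  have hdiff' : HasFDerivAt f (0 : E →L[ℝ] ℝ) (x₀ + (0:ℝ) • u) := by simpa using hdiff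
  have hcomp : HasDerivAt (fun t : ℝ => f (x₀ + t • u)) 0 0 := by
    have h := hdiff'.comp_hasDerivAt 0 hline
    simp at h
    exact h
  have hslope := hasDerivAt_iff_tendsto_slope.1 hcomp
  have hslope' : Tendsto (fun t : ℝ => (f (x₀ + t • u) - f x₀) / t) (𝓝[>] (0:ℝ)) (𝓝 0) := by
    have := hslope.mono_left (nhdsWithin_mono _ (fun t ht => ne_of_gt ht : Set.Ioi (0:ℝ) ⊆ {(0:ℝ)}ᶜ))
    refine this.congr (fun t => ?_)
    simp [slope_def_field]
  have : Tendsto (fun t : ℝ => (((f (x₀ + t • u) - f x₀) / t : ℝ) : EReal)) (𝓝[>] (0:ℝ))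
      (𝓝 ((0:ℝ) : EReal)) :=
    (continuous_coe_real_ereal.tendsto _).comp hslope'
  simpa [diniD1] using this.liminf_eq

/-- A one–dimensional mean value inequality from a lower bound on the right lower Dini
derivative, for continuous functions. -/
lemma dini_mvt {g : ℝ → ℝ} {m : ℝ} (hg : ContinuousOn g (Set.Icc 0 1))
    (h : ∀ s ∈ Set.Ico (0:ℝ) 1, (m : EReal) ≤
      Filter.liminf (fun t : ℝ => (((g (s + t) - g s) / t : ℝ) : EReal)) (𝓝[>] (0:ℝ))) :
    g 0 + m ≤ g 1 := by
  have key : ∀ ⦃x⦄, x ∈ Set.Icc (0:ℝ) 1 → -g x ≤ -g 0 + (-m) * x := by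
    refine image_le_of_liminf_slope_right_le_deriv_boundary
      (f := fun s => -g s) (B := fun s => -g 0 + (-m) * s) (B' := fun _ => -m)
      hg.neg (by simp) (by fun_prop) (fun x _ => ?_) (fun x hx r hr => ?_)
    · simpa using ((hasDerivWithinAt_id x (Set.Ici x)).const_mul (-m)).const_add (-g 0)
    · -- need : ∃ᶠ z in 𝓝[>] x, slope (fun s => -g s) x z < r
      have hlim := h x hx
      have hr' : -m < r := hr
      have hrm : ((-r : ℝ) : EReal) < (m : EReal) := by
        exact_mod_cast (by linarith : (-r : ℝ) < m)
      have hev : ∀ᶠ t in 𝓝[>] (0:ℝ),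
          ((-r : ℝ) : EReal) < (((g (x + t) - g x) / t : ℝ) : EReal) :=
        eventually_lt_of_lt_liminf (lt_of_lt_of_le hrm hlim)
      have hmap : Filter.map (fun t : ℝ => x + t) (𝓝[>] (0:ℝ)) = 𝓝[>] x := by
        have := (Homeomorph.addLeft x).isEmbedding.map_nhdsWithin_eq (Set.Ioi (0:ℝ)) 0
        simpa [Set.image_const_add_Ioi] using this
      rw [← hmap, Filter.frequently_map]
      refine (hev.mono fun t ht => ?_).frequently
      have ht' : (-r : ℝ) < (g (x + t) - g x) / t := by exact_mod_cast ht
      have hsl : slope (fun s => -g s) x (x + t) = -((g (x + t) - g x) / t) := by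
        simp [slope_def_field]
        ring
      show slope (fun s => -g s) x (x + t) < r
      rw [hsl]
      linarith
  have := key (Set.right_mem_Icc.2 zero_le_one)
  linarith [this]

set_option maxHeartbeats 1600000 in
/-- Let `f : E → ℝ` be continuous on some neighborhood of `x̄`, `l`-stable
at `x̄`, and Fréchet differentiable at `x̄`. If `f` is strongly pseudoconvex at `x̄` in the
Dini sense, then `x̄` is an isolated local minimizer of second order if and only if
`∇f(x̄) = 0`. -/
theorem strongly_pseudoconvex_isolated_min_iff_deriv_zero
    {E : Type*} [NormedAddCommGroup E] [InnerProductSpace ℝ E] [FiniteDimensional ℝ E]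
    (f : E → ℝ) (x₀ : E) (f' : E →L[ℝ] ℝ)
    (hcont : ∃ U ∈ 𝓝 x₀, ContinuousOn f U)
    (hstab : LStableAt f x₀)
    (hdiff : HasFDerivAt f f' x₀)
    (hspc : ∀ u : E, ‖u‖ = 1 → diniD1 f x₀ u = 0 →
      ∃ δ : ℝ, 0 < δ ∧ ∃ α : ℝ, 0 < α ∧ ∀ t : ℝ, 0 < t → t < δ →
        f x₀ + α * t ^ 2 ≤ f (x₀ + t • u)) :
    (∃ C : ℝ, 0 < C ∧ ∃ N ∈ 𝓝 x₀, ∀ x ∈ N, x ≠ x₀ → f x₀ + C * ‖x - x₀‖ ^ 2 < f x) ↔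
      f' = 0 := by
  constructor
  · rintro ⟨C, hC, N, hN, hmin⟩
    have hloc : IsLocalMin f x₀ := by
      filter_upwards [hN] with x hx
      rcases eq_or_ne x x₀ with rfl | hne
      · exact le_refl _
      · have := hmin x hx hne
        nlinarith [sq_nonneg ‖x - x₀‖, norm_nonneg (x - x₀)]
    exact hloc.hasFDerivAt_eq_zero hdiff
  · rintro rfl
    -- all Dini derivatives at x₀ vanish
    have hdini0 : ∀ u : E, diniD1 f x₀ u = 0 := diniD1_eq_zero_of_hasFDerivAt_zero hdiff
    obtain ⟨Uc, hUc, hfc⟩ := hcont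
    obtain ⟨Us, hUs, K, hK, hstab'⟩ := hstab
    obtain ⟨r, hr, hball⟩ := Metric.mem_nhds_iff.1 (Filter.inter_mem hUc hUs)
    -- lower bound on Dini derivatives near x₀
    have hlow : ∀ y ∈ Metric.ball x₀ r, ∀ w : E,
        ∃ dy : ℝ, diniD1 f y w = (dy : EReal) ∧ -(K * ‖y - x₀‖ * ‖w‖) ≤ dy := by
      intro y hy w
      obtain ⟨dy, dx, h1, h2, h3⟩ := hstab' y (hball hy).2 w
      have hdx : dx = 0 := by
        have := (hdini0 w).symm.trans h2
        exact_mod_cast this.symm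
      refine ⟨dy, h1, ?_⟩
      rw [hdx, sub_zero] at h3
      exact neg_le_of_abs_le h3
    -- for each unit vector, strong pseudoconvexity data
    rcases subsingleton_or_nontrivial E with hE | hE
    · refine ⟨1, one_pos, Set.univ, Filter.univ_mem, fun x _ hx => absurd (Subsingleton.elim x x₀) hx⟩
    have hsph : ∀ u : (Metric.sphere (0:E) 1),
        ∃ δ : ℝ, 0 < δ ∧ ∃ α : ℝ, 0 < α ∧ ∀ t : ℝ, 0 < t → t < δ →
          f x₀ + α * t ^ 2 ≤ f (x₀ + t • (u:E)) := by
      intro u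
      have hu : ‖(u:E)‖ = 1 := by simpa using mem_sphere_zero_iff_norm.1 u.2
      exact hspc u hu (hdini0 u)
    choose δ hδ α hα hquad using hsph
    -- cover the sphere by finitely many balls
    set ρ : (Metric.sphere (0:E) 1) → ℝ := fun u => min (α u / (4 * K)) 1 with hρdef
    have hρpos : ∀ u, 0 < ρ u := fun u =>
      lt_min (div_pos (hα u) (by linarith)) one_pos
    have hcov : (Metric.sphere (0:E) 1) ⊆ ⋃ u : (Metric.sphere (0:E) 1),
        Metric.ball (u:E) (ρ u) := by
      intro v hv
      exact Set.mem_iUnion.2 ⟨⟨v, hv⟩, Metric.mem_ball_self (hρpos _)⟩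
    obtain ⟨ι, hι⟩ := (isCompact_sphere (0:E) 1).elim_finite_subcover
      (fun u : (Metric.sphere (0:E) 1) => Metric.ball (u:E) (ρ u))
      (fun u => Metric.isOpen_ball) hcov
    have hιne : ι.Nonempty := by
      obtain ⟨v, hv⟩ := exists_norm_eq E zero_le_one
      have hv' : v ∈ Metric.sphere (0:E) 1 := by simpa [mem_sphere_zero_iff_norm] using hv
      obtain ⟨i, hi, -⟩ := Set.mem_iUnion₂.1 (hι hv')
      exact ⟨i, hi⟩
    set αmin : ℝ := ι.inf' hιne α with hαmin
    set δmin : ℝ := ι.inf' hιne δ with hδmin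
    have hαminpos : 0 < αmin := (Finset.lt_inf'_iff hιne).2 fun i _ => hα i
    have hδminpos : 0 < δmin := (Finset.lt_inf'_iff hιne).2 fun i _ => hδ i
    refine ⟨αmin / 4, by linarith, Metric.ball x₀ (min (r/2) δmin),
      Metric.ball_mem_nhds _ (lt_min (by linarith) hδminpos), fun x hx hne => ?_⟩
    set t : ℝ := ‖x - x₀‖ with htdef
    have ht : 0 < t := norm_pos_iff.2 (sub_ne_zero.2 hne)
    have hxd : t < min (r/2) δmin := by
      rw [htdef, ← dist_eq_norm]; exact Metric.mem_ball.1 hx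
    have htr : t < r / 2 := lt_of_lt_of_le hxd (min_le_left _ _)
    have htδ : t < δmin := lt_of_lt_of_le hxd (min_le_right _ _)
    set v : E := t⁻¹ • (x - x₀) with hvdef
    have hvnorm : ‖v‖ = 1 := by
      rw [hvdef, norm_smul, norm_inv, Real.norm_eq_abs, abs_of_pos ht]
      exact inv_mul_cancel₀ ht.ne'
    have hvs : v ∈ Metric.sphere (0:E) 1 := by simpa [mem_sphere_zero_iff_norm] using hvnorm
    obtain ⟨i, hi, hiv⟩ := Set.mem_iUnion₂.1 (hι hvs)
    set u : E := (i : E) with hudef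
    have hunorm : ‖u‖ = 1 := by rw [hudef]; exact mem_sphere_zero_iff_norm.1 i.2
    have hvu : ‖v - u‖ < ρ i := by
      have := Metric.mem_ball.1 hiv
      rwa [dist_eq_norm] at this
    have hρ1 : ρ i ≤ 1 := min_le_right _ _
    have hρα : ρ i ≤ α i / (4 * K) := min_le_left _ _
    -- Step 1: pseudoconvexity estimate in direction u
    have hstep1 : f x₀ + α i * t ^ 2 ≤ f (x₀ + t • u) :=
      hquad i t ht (lt_of_lt_of_le htδ (Finset.inf'_le _ hi))
    -- Step 2: MVT from x₀ + t • u to x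
    set w : E := t • (v - u) with hwdef
    set y₀ : E := x₀ + t • u with hy₀def
    have hwnorm : ‖w‖ = t * ‖v - u‖ := by
      rw [hwdef, norm_smul, Real.norm_eq_abs, abs_of_pos ht]
    have hxeq : y₀ + w = x := by
      rw [hy₀def, hwdef, hvdef]
      rw [smul_sub, smul_inv_smul₀ ht.ne']
      abel
    have hseg : ∀ s ∈ Set.Icc (0:ℝ) 1, y₀ + s • w ∈ Metric.ball x₀ r := by
      intro s hs
      rw [Metric.mem_ball, dist_eq_norm, hy₀def]
      have : x₀ + t • u + s • w - x₀ = t • u + s • w := by abel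
      rw [this]
      have h1 : ‖t • u‖ = t := by
        rw [norm_smul, Real.norm_eq_abs, abs_of_pos ht, hunorm, mul_one]
      have h2 : ‖s • w‖ ≤ t := by
        rw [norm_smul, Real.norm_eq_abs, abs_of_nonneg hs.1, hwnorm]
        have hvu1 : ‖v - u‖ ≤ 1 := le_of_lt (lt_of_lt_of_le hvu hρ1)
        have h5 : t * ‖v - u‖ ≤ t := by nlinarith [norm_nonneg (v - u)]
        have h6 : s * (t * ‖v - u‖) ≤ t * ‖v - u‖ :=
          mul_le_of_le_one_left (by positivity) hs.2
        linarith
      calc ‖t • u + s • w‖ ≤ ‖t • u‖ + ‖s • w‖ := norm_add_le _ _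
        _ ≤ t + t := by rw [h1]; linarith
        _ < r := by linarith
    have hgcont : ContinuousOn (fun s : ℝ => f (y₀ + s • w)) (Set.Icc 0 1) := by
      apply hfc.comp ((continuous_const.add (continuous_id.smul continuous_const)).continuousOn)
      intro s hs
      exact (hball (hseg s hs)).1
    have hm : ∀ s ∈ Set.Ico (0:ℝ) 1,
        ((-(2 * K * t ^ 2 * ‖v - u‖) : ℝ) : EReal) ≤
        Filter.liminf (fun h : ℝ =>
          (((f (y₀ + (s + h) • w) - f (y₀ + s • w)) / h : ℝ) : EReal)) (𝓝[>] (0:ℝ)) := by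
      intro s hs
      set z : E := y₀ + s • w with hzdef
      have hz : z ∈ Metric.ball x₀ r := hseg s ⟨hs.1, le_of_lt hs.2⟩
      obtain ⟨dz, hdz, hdzlow⟩ := hlow z hz w
      have hpt : ∀ h : ℝ, y₀ + (s + h) • w = z + h • w := by
        intro h
        rw [hzdef, add_smul]
        abel
      have heq : Filter.liminf (fun h : ℝ =>
          (((f (y₀ + (s + h) • w) - f (y₀ + s • w)) / h : ℝ) : EReal)) (𝓝[>] (0:ℝ))
          = diniD1 f z w := by
        unfold diniD1
        congr 1
        funext h
        rw [hpt h]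
      rw [heq, hdz, EReal.coe_le_coe_iff]
      have hznorm : ‖z - x₀‖ ≤ 2 * t := by
        have := Metric.mem_ball.1 (hseg s ⟨hs.1, le_of_lt hs.2⟩)
        have h2 : ‖z - x₀‖ ≤ ‖t • u‖ + ‖s • w‖ := by
          rw [hzdef, hy₀def]
          have : x₀ + t • u + s • w - x₀ = t • u + s • w := by abel
          rw [this]
          exact norm_add_le _ _
        have h3 : ‖t • u‖ = t := by
          rw [norm_smul, Real.norm_eq_abs, abs_of_pos ht, hunorm, mul_one]
        have h4 : ‖s • w‖ ≤ t := by
          rw [norm_smul, Real.norm_eq_abs, abs_of_nonneg hs.1, hwnorm]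
          have hvu1 : ‖v - u‖ ≤ 1 := le_of_lt (lt_of_lt_of_le hvu hρ1)
          have h5 : t * ‖v - u‖ ≤ t := by nlinarith [norm_nonneg (v - u)]
          have h6 : s * (t * ‖v - u‖) ≤ t * ‖v - u‖ :=
            mul_le_of_le_one_left (by positivity) hs.2.le
          linarith
        linarith
      have hkey : K * ‖z - x₀‖ * ‖w‖ ≤ 2 * K * t ^ 2 * ‖v - u‖ := by
        rw [hwnorm]
        have h7 : ‖z - x₀‖ * (K * (t * ‖v - u‖)) ≤ (2 * t) * (K * (t * ‖v - u‖)) :=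
          mul_le_mul_of_nonneg_right hznorm (by positivity)
        nlinarith [h7]
      linarith
    have hmvt := dini_mvt hgcont hm
    simp only [zero_smul, add_zero, one_smul] at hmvt
    rw [hxeq] at hmvt
    -- combine
    have hαi : αmin ≤ α i := Finset.inf'_le _ hi
    have hvu' : 2 * K * ‖v - u‖ ≤ α i / 2 := by
      have h1 : ‖v - u‖ ≤ α i / (4 * K) := le_of_lt (lt_of_lt_of_le hvu hρα)
      have h2 : 2 * K * ‖v - u‖ ≤ 2 * K * (α i / (4 * K)) := by nlinarith [hK]
      have h3 : 2 * K * (α i / (4 * K)) = α i / 2 := by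
        field_simp
        ring
      linarith
    nlinarith [mul_le_mul_of_nonneg_right hvu' (sq_nonneg t),
      mul_pos hαminpos (pow_pos ht 2), mul_le_mul_of_nonneg_right hαi (sq_nonneg t)]
end

section
/- Let E be a real finite-dimensional Euclidean space and f : E → ℝ ∪ {+∞} a proper extended real-valued function that is strongly pseudoconvex at x̄ ∈ dom f in the Hadamard sense. Then x̄ is an isolated local minimizer of second order for f if and only if 0 ∈ ∂⁻f(x̄), i.e., if and only if f⁻(x̄;u) ≥ 0 for all u ∈ E. -/
open Filter Topology

/-- Let `f` be a proper extended real-valued function, strongly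
pseudoconvex at `x̄ ∈ dom f` in the Hadamard sense. Then `x̄` is an isolated local
minimizer of second order if and only if `0 ∈ ∂⁻f(x̄)`. -/
theorem strongly_pseudoconvex_hadamard_isolated_min_iff
    {E : Type*} [NormedAddCommGroup E] [InnerProductSpace ℝ E] [FiniteDimensional ℝ E]
    (f : E → EReal) (hproper : (∀ x, f x ≠ ⊥) ∧ ∃ x, f x ≠ ⊤)
    (x₀ : E) (hdom : f x₀ ≠ ⊤)
    (hspc : ∀ d : E, ‖d‖ = 1 → hadamardD1 f x₀ d = 0 →
      ∃ ε : ℝ, 0 < ε ∧ ∃ δ : ℝ, 0 < δ ∧ ∃ α : ℝ, 0 < α ∧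
        ∀ t : ℝ, 0 ≤ t → t < δ → ∀ d' : E, ‖d'‖ = 1 → ‖d' - d‖ < ε →
          f x₀ + ((α * t ^ 2 : ℝ) : EReal) ≤ f (x₀ + t • d')) :
    IsolatedLocalMinOrder2 f x₀ ↔ (0 : E →L[ℝ] ℝ) ∈ hadamardSubdiff f x₀ := by
  obtain ⟨hbot, -⟩ := hproper
  obtain ⟨a, ha⟩ : ∃ a : ℝ, f x₀ = (a : EReal) :=
    ⟨(f x₀).toReal, (EReal.coe_toReal hdom (hbot x₀)).symm⟩
  constructor
  · rintro ⟨C, hC, N, hN, hmin⟩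
    intro u
    simp only [ContinuousLinearMap.zero_apply, EReal.coe_zero]
    refine Filter.le_liminf_of_le (by isBoundedDefault) ?_
    obtain ⟨r, hr, hrN⟩ := Metric.mem_nhds_iff.1 hN
    have hA : Set.Ioo (0:ℝ) (r / (‖u‖ + 1)) ∈ 𝓝[>] (0:ℝ) :=
      Ioo_mem_nhdsGT_of_mem ⟨le_refl 0, by positivity⟩
    have hB : Metric.ball u 1 ∈ 𝓝 u := Metric.ball_mem_nhds u one_pos
    filter_upwards [Filter.prod_mem_prod hA hB] with p hp
    obtain ⟨⟨ht0, htr⟩, hu'⟩ := hp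
    have htinv : (0 : EReal) ≤ ((p.1⁻¹ : ℝ) : EReal) :=
      EReal.coe_nonneg.2 (inv_nonneg.2 ht0.le)
    have hD : (0 : EReal) ≤ f (x₀ + p.1 • p.2) - f x₀ := by
      by_cases hx : x₀ + p.1 • p.2 = x₀
      · rw [hx, ha, ← EReal.coe_sub]; norm_num
      · have hu'n : ‖p.2‖ < ‖u‖ + 1 := by
          have h1 : ‖p.2 - u‖ < 1 := mem_ball_iff_norm.1 hu'
          have h2 : ‖p.2‖ ≤ ‖u‖ + ‖p.2 - u‖ := by
            simpa using norm_add_le u (p.2 - u)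
          linarith
        have hmem : x₀ + p.1 • p.2 ∈ N := by
          apply hrN
          rw [Metric.mem_ball, dist_eq_norm]
          have he : ‖x₀ + p.1 • p.2 - x₀‖ = p.1 * ‖p.2‖ := by
            simp [norm_smul, abs_of_pos ht0]
          rw [he]
          calc p.1 * ‖p.2‖ ≤ p.1 * (‖u‖ + 1) := by nlinarith
            _ < r / (‖u‖ + 1) * (‖u‖ + 1) := by
                have : (0:ℝ) < ‖u‖ + 1 := by positivity
                nlinarith
            _ = r := by field_simp
        have hlt := hmin _ hmem hx
        have h3 : f x₀ ≤ f (x₀ + p.1 • p.2) := by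
          refine le_of_lt (lt_of_le_of_lt ?_ hlt)
          exact le_add_of_nonneg_right (EReal.coe_nonneg.2 (by positivity))
        rw [ha] at h3 ⊢
        exact (EReal.le_sub_iff_add_le (Or.inl (EReal.coe_ne_bot a))
          (Or.inl (EReal.coe_ne_top a))).2 (by simpa using h3)
    exact mul_nonneg htinv hD
  · intro h0
    have hge : ∀ u : E, (0 : EReal) ≤ hadamardD1 f x₀ u := by
      intro u
      have := h0 u
      simpa using this
    have hA : ∀ d : E, ∃ ε δ α : ℝ, 0 < ε ∧ 0 < δ ∧ 0 < α ∧ (‖d‖ = 1 →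
        ∀ t : ℝ, 0 ≤ t → t < δ → ∀ d' : E, ‖d'‖ = 1 → ‖d' - d‖ < ε →
          f x₀ + ((α * t ^ 2 : ℝ) : EReal) ≤ f (x₀ + t • d')) := by
      intro d
      by_cases hd : ‖d‖ = 1
      · rcases eq_or_lt_of_le (hge d) with heq | hlt
        · obtain ⟨ε, hε, δ, hδ, α, hα, H⟩ := hspc d hd heq.symm
          exact ⟨ε, δ, α, hε, hδ, hα, fun _ => H⟩
        · obtain ⟨c, hc0, hcl⟩ : ∃ c : ℝ, (0:EReal) < (c:EReal) ∧
              (c : EReal) < hadamardD1 f x₀ d := EReal.exists_between_coe_real hlt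
          have hc0' : (0:ℝ) < c := by exact_mod_cast hc0
          have hev : ∀ᶠ p : ℝ × E in (𝓝[>] (0:ℝ)) ×ˢ 𝓝 d,
              (c : EReal) < ((p.1⁻¹ : ℝ) : EReal) * (f (x₀ + p.1 • p.2) - f x₀) :=
            Filter.eventually_lt_of_lt_liminf hcl (by isBoundedDefault)
          rw [Filter.eventually_prod_iff] at hev
          obtain ⟨pa, hpa, pb, hpb, hI⟩ := hev
          obtain ⟨δ, hδ, hsub⟩ := mem_nhdsGT_iff_exists_Ioo_subset.1 hpa
          obtain ⟨ε, hε, hball⟩ := Metric.eventually_nhds_iff.1 hpb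
          rw [Set.mem_Ioi] at hδ
          refine ⟨ε, δ, c / δ, hε, hδ, by positivity, fun _ t ht0 htδ d' hd' hdd' => ?_⟩
          rcases eq_or_lt_of_le ht0 with rfl | ht0'
          · simp [ha, ← EReal.coe_add]
          · have hc : (c : EReal) < ((t⁻¹ : ℝ) : EReal) * (f (x₀ + t • d') - f x₀) :=
              hI (hsub ⟨ht0', htδ⟩) (hball (by rwa [dist_eq_norm]))
            by_cases htop : f (x₀ + t • d') = ⊤
            · rw [htop, ha, ← EReal.coe_add]
              exact le_top
            · obtain ⟨y, hy⟩ : ∃ y : ℝ, f (x₀ + t • d') = (y : EReal) :=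
                ⟨(f (x₀ + t • d')).toReal, (EReal.coe_toReal htop (hbot _)).symm⟩
              rw [hy, ha, ← EReal.coe_sub, ← EReal.coe_mul] at hc
              rw [hy, ha, ← EReal.coe_add, EReal.coe_le_coe_iff]
              have hlt2 : c * t < y - a := by
                have := EReal.coe_lt_coe_iff.1 hc
                rwa [inv_mul_eq_div, lt_div_iff₀ ht0'] at this
              have h4 : c / δ * t ^ 2 ≤ c * t := by
                rw [div_mul_eq_mul_div, div_le_iff₀ hδ]
                nlinarith [mul_le_mul_of_nonneg_left htδ.le (mul_nonneg hc0'.le ht0)]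
              linarith
      · exact ⟨1, 1, 1, one_pos, one_pos, one_pos, fun h => absurd h hd⟩
    choose ε δ α hε hδ hα H using hA
    by_cases hsph : ∃ d : E, ‖d‖ = 1
    · have hcover : Metric.sphere (0:E) 1 ⊆
          ⋃ d : Metric.sphere (0:E) 1, Metric.ball (d : E) (ε (d : E)) :=
        fun d hd => Set.mem_iUnion.2 ⟨⟨d, hd⟩, Metric.mem_ball_self (hε d)⟩
      obtain ⟨s, hs⟩ := (isCompact_sphere (0:E) 1).elim_finite_subcover
        (fun d : Metric.sphere (0:E) 1 => Metric.ball (d : E) (ε (d : E)))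
        (fun _ => Metric.isOpen_ball) hcover
      obtain ⟨d₀, hd₀⟩ := hsph
      have hd₀s : (d₀ : E) ∈ Metric.sphere (0:E) 1 := mem_sphere_zero_iff_norm.2 hd₀
      have hsne : s.Nonempty := by
        obtain ⟨i, hi⟩ := Set.mem_iUnion₂.1 (hs hd₀s)
        exact ⟨i, hi.1⟩
      set δ₀ : ℝ := s.inf' hsne (fun d => δ (d : E)) with hδ₀def
      set α₀ : ℝ := s.inf' hsne (fun d => α (d : E)) with hα₀def
      have hδ₀ : 0 < δ₀ := (Finset.lt_inf'_iff hsne).2 fun i _ => hδ _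
      have hα₀ : 0 < α₀ := (Finset.lt_inf'_iff hsne).2 fun i _ => hα _
      refine ⟨α₀ / 2, by positivity, Metric.ball x₀ δ₀, Metric.ball_mem_nhds _ hδ₀,
        fun x hx hxne => ?_⟩
      set t : ℝ := ‖x - x₀‖ with htdef
      have ht0 : 0 < t := norm_pos_iff.2 (sub_ne_zero.2 hxne)
      have htδ : t < δ₀ := by
        have := Metric.mem_ball.1 hx
        rwa [dist_eq_norm] at this
      set d' : E := t⁻¹ • (x - x₀) with hd'def
      have hd'norm : ‖d'‖ = 1 := norm_smul_inv_norm (sub_ne_zero.2 hxne)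
      have hd'sph : d' ∈ Metric.sphere (0:E) 1 := mem_sphere_zero_iff_norm.2 hd'norm
      obtain ⟨i, his, hib⟩ := Set.mem_iUnion₂.1 (hs hd'sph)
      have hinorm : ‖(i : E)‖ = 1 := mem_sphere_zero_iff_norm.1 i.2
      have hidist : ‖d' - (i : E)‖ < ε (i : E) := by
        have := Metric.mem_ball.1 hib
        rwa [dist_eq_norm] at this
      have htδi : t < δ (i : E) := lt_of_lt_of_le htδ (Finset.inf'_le _ his)
      have hkey := H (i : E) hinorm t ht0.le htδi d' hd'norm hidist
      have hxd : x₀ + t • d' = x := by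
        rw [hd'def, smul_inv_smul₀ ht0.ne']
        abel
      rw [hxd] at hkey
      have hαi : α₀ ≤ α (i : E) := Finset.inf'_le _ his
      calc f x₀ + ((α₀ / 2 * ‖x - x₀‖ ^ 2 : ℝ) : EReal)
          < f x₀ + ((α (i : E) * t ^ 2 : ℝ) : EReal) := by
            rw [ha, ← EReal.coe_add, ← EReal.coe_add, EReal.coe_lt_coe_iff, ← htdef]
            nlinarith [sq_nonneg t, mul_pos ht0 ht0]
        _ ≤ f x := hkey
    · refine ⟨1, one_pos, Set.univ, Filter.univ_mem, fun x _ hxne => ?_⟩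
      exact absurd ⟨_, norm_smul_inv_norm (𝕜 := ℝ) (sub_ne_zero.2 hxne)⟩ hsph
end

section
/- Let f : X → ℝⁿ be defined on a set X ⊆ ℝˢ, let S ⊆ X, x̄ ∈ S, and k ≥ 1. Then the following two properties of x̄ are equivalent: (i) there exist a constant A > 0 and a neighborhood N of x̄ such that (f(x) + ℝⁿ₊) ∩ B(f(x̄), A‖x−x̄‖ᵏ) = ∅ for all x ∈ S ∩ N with x ≠ x̄; (ii) there exist a constant A > 0 and a neighborhood N of x̄ such that for every x ∈ S ∩ N with x ≠ x̄ there exists an index i ∈ {1,…,n} (depending on x) with f_i(x) > f_i(x̄) + A‖x−x̄‖ᵏ. -/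
open Filter Topology

private lemma abs_coord_le_dist {n : ℕ} (y z : EuclideanSpace ℝ (Fin n)) (i : Fin n) :
    |y i - z i| ≤ dist y z := by
  rw [EuclideanSpace.dist_eq]
  simp only [Real.dist_eq, sq_abs]
  rw [← Real.sqrt_sq (abs_nonneg (y i - z i))]
  apply Real.sqrt_le_sqrt
  rw [sq_abs]
  exact Finset.single_le_sum (f := fun j => (y j - z j) ^ 2)
    (fun j _ => sq_nonneg _) (Finset.mem_univ i)

private lemma dist_le_of_coords {n : ℕ} (y z : EuclideanSpace ℝ (Fin n)) {C : ℝ}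
    (hC : 0 ≤ C) (h : ∀ i, |y i - z i| ≤ C) :
    dist y z ≤ Real.sqrt n * C := by
  rw [EuclideanSpace.dist_eq]
  simp only [Real.dist_eq, sq_abs]
  have : ∑ i, (y i - z i) ^ 2 ≤ (n : ℝ) * C ^ 2 := by
    calc ∑ i, (y i - z i) ^ 2 ≤ ∑ _i : Fin n, C ^ 2 := by
          apply Finset.sum_le_sum
          intro i _
          rw [← sq_abs]
          exact pow_le_pow_left₀ (abs_nonneg _) (h i) 2
      _ = (n : ℝ) * C ^ 2 := by simp [Finset.sum_const, mul_comm]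
  calc Real.sqrt (∑ i, (y i - z i) ^ 2) ≤ Real.sqrt ((n : ℝ) * C ^ 2) :=
        Real.sqrt_le_sqrt this
    _ = Real.sqrt n * C := by
        rw [Real.sqrt_mul (Nat.cast_nonneg n), Real.sqrt_sq hC]

/-- For a vector function `f`, a set `S`, a point `x̄ ∈ S` and an order
`k ≥ 1`, the following are equivalent: (i) Jiménez's strict local minimality of order `k`
(the set `f(x) + ℝⁿ₊` misses the open ball `B(f(x̄), A‖x−x̄‖ᵏ)` for all `x ∈ S ∩ N`,
`x ≠ x̄`); (ii) the isolated local minimality of order `k` (for every such `x` some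
component satisfies `fᵢ(x) > fᵢ(x̄) + A‖x−x̄‖ᵏ`). The constants `A` may differ. -/
theorem strict_local_min_iff_isolated_local_min (s n : ℕ)
    (f : EuclideanSpace ℝ (Fin s) → EuclideanSpace ℝ (Fin n))
    (S : Set (EuclideanSpace ℝ (Fin s)))
    (x₀ : EuclideanSpace ℝ (Fin s)) (hx₀ : x₀ ∈ S)
    (k : ℕ) (hk : 1 ≤ k) :
    (∃ A : ℝ, 0 < A ∧ ∃ N ∈ 𝓝 x₀, ∀ x ∈ S ∩ N, x ≠ x₀ →
        {y : EuclideanSpace ℝ (Fin n) |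
            ∃ c : EuclideanSpace ℝ (Fin n), (∀ i, 0 ≤ c i) ∧ y = f x + c} ∩
          Metric.ball (f x₀) (A * ‖x - x₀‖ ^ k) = ∅) ↔
      ∃ A : ℝ, 0 < A ∧ ∃ N ∈ 𝓝 x₀, ∀ x ∈ S ∩ N, x ≠ x₀ →
        ∃ i : Fin n, f x₀ i + A * ‖x - x₀‖ ^ k < f x i := by
  constructor
  · rintro ⟨A, hA, N, hN, h⟩
    have hd : (0 : ℝ) < Real.sqrt n + 1 :=
      lt_of_lt_of_le one_pos (le_add_of_nonneg_left (Real.sqrt_nonneg n))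
    refine ⟨A / (Real.sqrt n + 1), div_pos hA hd, N, hN, fun x hx hxne => ?_⟩
    by_contra hcon
    push_neg at hcon
    set r : ℝ := ‖x - x₀‖ ^ k with hr
    have hrpos : 0 < r := pow_pos (norm_pos_iff.2 (sub_ne_zero.2 hxne)) k
    set A' : ℝ := A / (Real.sqrt n + 1) with hA'
    have hA'pos : 0 < A' := div_pos hA hd
    -- build the point y = f x + c, c i = max 0 (f x₀ i - f x i)
    set c : EuclideanSpace ℝ (Fin n) := WithLp.toLp 2 (fun i => max 0 (f x₀ i - f x i)) with hc
    set y : EuclideanSpace ℝ (Fin n) := f x + c with hy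
    have hyball : y ∈ Metric.ball (f x₀) (A * r) := by
      rw [Metric.mem_ball]
      have hcoord : ∀ i, |y i - f x₀ i| ≤ A' * r := by
        intro i
        have h1 : f x i ≤ f x₀ i + A' * r := hcon i
        have hyi : y i = max (f x i) (f x₀ i) := by
          simp only [hy, hc, PiLp.add_apply, PiLp.toLp_apply]
          rcases le_total (f x₀ i) (f x i) with hle | hle
          · rw [max_eq_left (show f x₀ i - f x i ≤ 0 by linarith), max_eq_left hle, add_zero]
          · rw [max_eq_right (show (0:ℝ) ≤ f x₀ i - f x i by linarith), max_eq_right hle]; ring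
        rw [hyi, abs_le]
        constructor
        · have := le_max_right (f x i) (f x₀ i)
          nlinarith [mul_pos hA'pos hrpos]
        · rcases le_total (f x₀ i) (f x i) with hle | hle
          · rw [max_eq_left hle]; linarith
          · rw [max_eq_right hle]
            nlinarith [mul_pos hA'pos hrpos]
      have := dist_le_of_coords y (f x₀) (le_of_lt (mul_pos hA'pos hrpos)) hcoord
      calc dist y (f x₀) ≤ Real.sqrt n * (A' * r) := this
        _ < (Real.sqrt n + 1) * (A' * r) := by
            nlinarith [mul_pos hA'pos hrpos]
        _ = A * r := by
            rw [hA']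
            field_simp
    have : y ∈ ({y : EuclideanSpace ℝ (Fin n) |
        ∃ c : EuclideanSpace ℝ (Fin n), (∀ i, 0 ≤ c i) ∧ y = f x + c} ∩
        Metric.ball (f x₀) (A * r)) :=
      ⟨⟨c, fun i => le_max_left _ _, rfl⟩, hyball⟩
    rw [h x hx hxne] at this
    exact this
  · rintro ⟨A, hA, N, hN, h⟩
    refine ⟨A, hA, N, hN, fun x hx hxne => ?_⟩
    ext y
    simp only [Set.mem_inter_iff, Set.mem_setOf_eq, Metric.mem_ball, Set.mem_empty_iff_false,
      iff_false, not_and]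
    rintro ⟨c, hc, rfl⟩
    obtain ⟨i, hi⟩ := h x hx hxne
    have h1 : A * ‖x - x₀‖ ^ k < (f x + c) i - f x₀ i := by
      have : f x i ≤ (f x + c) i := by
        simp only [PiLp.add_apply]
        linarith [hc i]
      linarith
    have h2 : |(f x + c) i - f x₀ i| ≤ dist (f x + c) (f x₀) :=
      abs_coord_le_dist _ _ i
    have h3 := le_abs_self ((f x + c) i - f x₀ i)
    linarith
end

section
/- Let E be a real finite-dimensional Euclidean space, f : E → ℝ ∪ {+∞} a proper extended real-valued function, and x̄ ∈ dom f a point at which the Dini necessary conditions fail, i.e., either there is u ∈ E with f'_D(x̄;u) < 0, or there is u ∈ E with f'_D(x̄;u) = 0 and f''_D(x̄;u) < 0. Then the Hadamard conditions also fail at x̄: either there is v ∈ E with f⁻(x̄;v) < 0, or 0 ∈ ∂⁻f(x̄) and there is v ∈ E with f⁻²(x̄;0;v) < 0. -/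
open Filter Topology

/-- The lower Dini directional derivative of an extended real-valued function:
`f'_D(x;u) = liminf_{t↓0} (f(x+tu) − f(x))/t`. -/
noncomputable def diniD1E {E : Type*} [NormedAddCommGroup E] [InnerProductSpace ℝ E]
    (f : E → EReal) (x u : E) : EReal :=
  Filter.liminf (fun t : ℝ => ((t⁻¹ : ℝ) : EReal) * (f (x + t • u) - f x)) (𝓝[>] (0 : ℝ))

/-- The second-order lower Dini directional derivative relative to the (real) value `d`
of `f'_D(x;u)`: `f''_D(x;u) = liminf_{t↓0} 2(f(x+tu) − f(x) − t·d)/t²`. -/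
noncomputable def diniD2E {E : Type*} [NormedAddCommGroup E] [InnerProductSpace ℝ E]
    (f : E → EReal) (x u : E) (d : ℝ) : EReal :=
  Filter.liminf
    (fun t : ℝ => ((2 / t ^ 2 : ℝ) : EReal) * (f (x + t • u) - f x - ((t * d : ℝ) : EReal)))
    (𝓝[>] (0 : ℝ))

/-- If the Dini necessary conditions fail at `x̄ ∈ dom f` (either
`f'_D(x̄;u) < 0` for some `u`, or `f'_D(x̄;u) = 0` and `f''_D(x̄;u) < 0` for some `u`),
then the Hadamard conditions also fail at `x̄`: either `f⁻(x̄;v) < 0` for some `v`, or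
`0 ∈ ∂⁻f(x̄)` and `f⁻²(x̄;0;v) < 0` for some `v`. -/
theorem dini_conditions_fail_implies_hadamard_fail
    {E : Type*} [NormedAddCommGroup E] [InnerProductSpace ℝ E] [FiniteDimensional ℝ E]
    (f : E → EReal) (hproper : (∀ x, f x ≠ ⊥) ∧ ∃ x, f x ≠ ⊤)
    (x₀ : E) (hdom : f x₀ ≠ ⊤)
    (hfail : (∃ u : E, diniD1E f x₀ u < 0) ∨
      ∃ u : E, diniD1E f x₀ u = 0 ∧ diniD2E f x₀ u 0 < 0) :
    (∃ v : E, hadamardD1 f x₀ v < 0) ∨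
      ((0 : E →L[ℝ] ℝ) ∈ hadamardSubdiff f x₀ ∧ ∃ v : E, hadamardD2 f x₀ 0 v < 0) := by
  have key : ∀ (g : ℝ × E → EReal) (u : E),
      Filter.liminf g ((𝓝[>] (0 : ℝ)) ×ˢ 𝓝 u) ≤
        Filter.liminf (fun t : ℝ => g (t, u)) (𝓝[>] (0 : ℝ)) := by
    intro g u
    have hm : Tendsto (fun t : ℝ => ((t, u) : ℝ × E)) (𝓝[>] (0 : ℝ))
        ((𝓝[>] (0 : ℝ)) ×ˢ 𝓝 u) := tendsto_id.prodMk tendsto_const_nhds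
    have := Filter.liminf_le_liminf_of_le (u := g) hm
    rwa [← Filter.liminf_comp] at this
  have h1 : ∀ u : E, hadamardD1 f x₀ u ≤ diniD1E f x₀ u := fun u => key _ u
  have h2 : ∀ u : E, hadamardD2 f x₀ 0 u ≤ diniD2E f x₀ u 0 := by
    intro u
    refine le_trans (key _ u) (le_of_eq ?_)
    simp [diniD2E]
  rcases hfail with ⟨u, hu⟩ | ⟨u, hu1, hu2⟩
  · exact Or.inl ⟨u, lt_of_le_of_lt (h1 u) hu⟩
  · by_cases h0 : (0 : E →L[ℝ] ℝ) ∈ hadamardSubdiff f x₀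
    · exact Or.inr ⟨h0, u, lt_of_le_of_lt (h2 u) hu2⟩
    · left
      simp only [hadamardSubdiff, Set.mem_setOf_eq, not_forall, not_le,
        ContinuousLinearMap.zero_apply, EReal.coe_zero] at h0
      exact h0
end

section
/- Let E be a real finite-dimensional Euclidean space and f : E → ℝ be of class C^{1,1} on some neighborhood of x ∈ E (continuously differentiable with locally Lipschitz gradient). If ∇f(x) = 0 and f''_{BP}(x;u,u) := liminf_{t↓0} (∇f(x+tu)(u) − ∇f(x)(u))/t > 0 for every u ∈ E with u ≠ 0, then f attains a strict local minimum at x; in fact x is an isolated local minimizer of second order. -/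
open Filter Topology

/-- Let `f : E → ℝ` be of class `C^{1,1}` on a neighborhood `U` of `x`
(Fréchet differentiable on `U` with Lipschitz derivative `f'`). If `∇f(x) = 0` and the
Bednařík–Pastor derivative satisfies
`f''_{BP}(x;u,u) = liminf_{t↓0} (∇f(x+tu)(u) − ∇f(x)(u))/t > 0` for every `u ≠ 0`, then
`f` attains a strict local minimum at `x`; in fact `x` is an isolated local minimizer of
second order. -/
theorem bp_sufficient_conditions
    {E : Type*} [NormedAddCommGroup E] [InnerProductSpace ℝ E] [FiniteDimensional ℝ E]
    (f : E → ℝ) (x : E) (f' : E → E →L[ℝ] ℝ)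
    (U : Set E) (hU : U ∈ 𝓝 x)
    (hdiff : ∀ y ∈ U, HasFDerivAt f (f' y) y)
    (hlip : ∃ K : NNReal, LipschitzOnWith K f' U)
    (hcrit : f' x = 0)
    (hBP : ∀ u : E, u ≠ 0 →
      0 < Filter.liminf
        (fun t : ℝ => (((f' (x + t • u)) u - (f' x) u) / t : ℝ) : ℝ → EReal)
        (𝓝[>] (0 : ℝ))) :
    (∃ N ∈ 𝓝 x, ∀ y ∈ N, y ≠ x → f x < f y) ∧
      ∃ C : ℝ, 0 < C ∧ ∃ N ∈ 𝓝 x, ∀ y ∈ N, y ≠ x → f x + C * ‖y - x‖ ^ 2 < f y := by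
  rcases subsingleton_or_nontrivial E with hE | hE
  · refine ⟨⟨Set.univ, Filter.univ_mem, ?_⟩, 1, one_pos, Set.univ, Filter.univ_mem, ?_⟩ <;>
      exact fun y _ hy => absurd (Subsingleton.elim y x) hy
  obtain ⟨K, hK⟩ := hlip
  have hxU : x ∈ U := mem_of_mem_nhds hU
  obtain ⟨r, hr0, hrU⟩ : ∃ r > 0, Metric.closedBall x r ⊆ U := by
    rcases Metric.mem_nhds_iff.mp hU with ⟨ε, hε, hball⟩
    exact ⟨ε / 2, by linarith, (Metric.closedBall_subset_ball (by linarith)).trans hball⟩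
  set Kr : ℝ := (K : ℝ) with hKrdef
  have hKr0 : (0 : ℝ) ≤ Kr := K.coe_nonneg
  -- bound on ‖f' y‖ from the Lipschitz property and f' x = 0
  have hnorm : ∀ y ∈ U, ‖f' y‖ ≤ Kr * ‖y - x‖ := by
    intro y hy
    have h := hK.dist_le_mul y hy x hxU
    rw [dist_eq_norm, dist_eq_norm, hcrit, sub_zero] at h
    exact h
  -- membership of points on small segments
  have hmem : ∀ u : E, ‖u‖ = 1 → ∀ t : ℝ, 0 ≤ t → t ≤ r → x + t • u ∈ U := by
    intro u hu t ht htr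
    apply hrU
    simp only [Metric.mem_closedBall, dist_eq_norm, add_sub_cancel_left, norm_smul,
      Real.norm_eq_abs, abs_of_nonneg ht, hu, mul_one]
    exact htr
  -- Lipschitz-type estimate for the quotient (in multiplied form)
  have hlipq : ∀ u v : E, ‖u‖ = 1 → ‖v‖ = 1 → ∀ t : ℝ, 0 < t → t ≤ r →
      f' (x + t • u) u - 2 * Kr * t * ‖u - v‖ ≤ f' (x + t • v) v := by
    intro u v hu hv t ht htr
    have hmu := hmem u hu t ht.le htr
    have hmv := hmem v hv t ht.le htr
    have h1 : ‖f' (x + t • u) - f' (x + t • v)‖ ≤ Kr * (t * ‖u - v‖) := by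
      have h := hK.dist_le_mul _ hmu _ hmv
      rw [dist_eq_norm, dist_eq_norm] at h
      have heq : ‖x + t • u - (x + t • v)‖ = t * ‖u - v‖ := by
        rw [add_sub_add_left_eq_sub, ← smul_sub, norm_smul, Real.norm_eq_abs, abs_of_pos ht]
      rwa [heq] at h
    have h2 : ‖f' (x + t • v)‖ ≤ Kr * t := by
      have h := hnorm _ hmv
      have heq : ‖x + t • v - x‖ = t := by
        rw [add_sub_cancel_left, norm_smul, Real.norm_eq_abs, abs_of_pos ht, hv, mul_one]
      rwa [heq] at h
    have key : |f' (x + t • u) u - f' (x + t • v) v| ≤ 2 * Kr * t * ‖u - v‖ := by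
      have hdecomp : f' (x + t • u) u - f' (x + t • v) v
          = (f' (x + t • u) - f' (x + t • v)) u + f' (x + t • v) (u - v) := by
        simp only [ContinuousLinearMap.sub_apply, map_sub]
        ring
      rw [hdecomp]
      have hb1 : |(f' (x + t • u) - f' (x + t • v)) u| ≤ Kr * (t * ‖u - v‖) := by
        calc |(f' (x + t • u) - f' (x + t • v)) u|
            ≤ ‖f' (x + t • u) - f' (x + t • v)‖ * ‖u‖ :=
              (f' (x + t • u) - f' (x + t • v)).le_opNorm u
          _ ≤ Kr * (t * ‖u - v‖) := by rw [hu, mul_one]; exact h1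
      have hb2 : |f' (x + t • v) (u - v)| ≤ Kr * t * ‖u - v‖ := by
        calc |f' (x + t • v) (u - v)| ≤ ‖f' (x + t • v)‖ * ‖u - v‖ :=
              (f' (x + t • v)).le_opNorm (u - v)
          _ ≤ Kr * t * ‖u - v‖ := by
              exact mul_le_mul_of_nonneg_right h2 (norm_nonneg _)
      calc |(f' (x + t • u) - f' (x + t • v)) u + f' (x + t • v) (u - v)|
          ≤ |(f' (x + t • u) - f' (x + t • v)) u| + |f' (x + t • v) (u - v)| := abs_add_le _ _
        _ ≤ Kr * (t * ‖u - v‖) + Kr * t * ‖u - v‖ := add_le_add hb1 hb2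
        _ = 2 * Kr * t * ‖u - v‖ := by ring
    have := (abs_le.mp key).2
    linarith
  -- for every unit vector, extract a positive lower bound valid on a small interval
  have hexists : ∀ u : E, ‖u‖ = 1 → ∃ ε > 0, ∃ δ, 0 < δ ∧ δ ≤ r ∧
      ∀ t : ℝ, 0 < t → t ≤ δ → ε * t ≤ f' (x + t • u) u := by
    intro u hu
    have hu0 : u ≠ 0 := by
      intro h; rw [h, norm_zero] at hu; norm_num at hu
    have hL := hBP u hu0
    obtain ⟨c, hc0, hcL⟩ := exists_between hL
    have hc'0 : (0 : EReal) < min c 1 := lt_min hc0 (by norm_num)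
    have hc'L : min c 1 < Filter.liminf
        (fun t : ℝ => (((f' (x + t • u)) u - (f' x) u) / t : ℝ) : ℝ → EReal)
        (𝓝[>] (0 : ℝ)) := lt_of_le_of_lt (min_le_left _ _) hcL
    have h1top : (1 : EReal) < ⊤ := by
      rw [← EReal.coe_one]; exact EReal.coe_lt_top 1
    have hc'top : min c 1 ≠ (⊤ : EReal) :=
      (lt_of_le_of_lt (min_le_right c 1) h1top).ne
    have hc'bot : min c 1 ≠ (⊥ : EReal) := (lt_of_le_of_lt bot_le hc'0).ne'
    set ε : ℝ := (min c 1).toReal with hεdef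
    have hcoe : (ε : EReal) = min c 1 := EReal.coe_toReal hc'top hc'bot
    have hε0 : 0 < ε := by
      rw [← EReal.coe_lt_coe_iff, hcoe]
      exact_mod_cast hc'0
    have hev : ∀ᶠ t in 𝓝[>] (0 : ℝ),
        (ε : EReal) < (((f' (x + t • u)) u - (f' x) u) / t : ℝ) := by
      rw [hcoe]
      exact Filter.eventually_lt_of_lt_liminf hc'L
    obtain ⟨w, hw, hIoo⟩ := mem_nhdsGT_iff_exists_Ioo_subset.mp hev
    refine ⟨ε, hε0, min (w / 2) r, lt_min (by simpa using hw) hr0, min_le_right _ _, ?_⟩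
    intro t ht htδ
    have htw : t < w := lt_of_le_of_lt (htδ.trans (min_le_left _ _)) (by simpa using hw)
    have hmemt : t ∈ Set.Ioo (0 : ℝ) w := ⟨ht, htw⟩
    have := hIoo hmemt
    rw [Set.mem_setOf_eq, EReal.coe_lt_coe_iff] at this
    rw [hcrit] at this
    simp only [ContinuousLinearMap.zero_apply, sub_zero] at this
    have := (lt_div_iff₀ ht).mp this
    linarith
  choose! ε hε0 δ hδ0 hδr hkey using hexists
  -- compactness of the unit sphere: uniform bound
  set S : Set E := Metric.sphere (0 : E) 1 with hSdef
  have hScpt : IsCompact S := isCompact_sphere 0 1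
  have hSne : S.Nonempty := NormedSpace.sphere_nonempty.mpr zero_le_one
  have hVmem : ∀ u ∈ S, Metric.ball u (ε u / (4 * Kr + 1)) ∈ 𝓝 u := by
    intro u hu
    have hnu : ‖u‖ = 1 := mem_sphere_zero_iff_norm.mp hu
    exact Metric.ball_mem_nhds u (div_pos (hε0 u hnu) (by positivity))
  obtain ⟨T, hTS, hTcov⟩ := hScpt.elim_nhds_subcover
    (fun u => Metric.ball u (ε u / (4 * Kr + 1))) hVmem
  have hTne : T.Nonempty := by
    obtain ⟨u0, hu0⟩ := hSne
    obtain ⟨i, hi, _⟩ := Set.mem_iUnion₂.mp (hTcov hu0)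
    exact ⟨i, hi⟩
  set δ' : ℝ := T.inf' hTne δ with hδ'def
  set m : ℝ := T.inf' hTne (fun u => ε u / 2) with hmdef
  have hδ'0 : 0 < δ' := by
    rw [hδ'def, Finset.lt_inf'_iff]
    exact fun u hu => hδ0 u (mem_sphere_zero_iff_norm.mp (hTS u hu))
  have hm0 : 0 < m := by
    rw [hmdef, Finset.lt_inf'_iff]
    intro u hu
    have := hε0 u (mem_sphere_zero_iff_norm.mp (hTS u hu))
    linarith
  have hδ'r : δ' ≤ r := by
    obtain ⟨u, hu⟩ := hTne
    exact (Finset.inf'_le δ hu).trans (hδr u (mem_sphere_zero_iff_norm.mp (hTS u hu)))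
  -- the uniform lower bound on the sphere
  have main : ∀ v : E, ‖v‖ = 1 → ∀ t : ℝ, 0 < t → t ≤ δ' → m * t ≤ f' (x + t • v) v := by
    intro v hv t ht htδ
    have hvS : v ∈ S := mem_sphere_zero_iff_norm.mpr hv
    obtain ⟨u, huT, hvu⟩ := Set.mem_iUnion₂.mp (hTcov hvS)
    have hu : ‖u‖ = 1 := mem_sphere_zero_iff_norm.mp (hTS u huT)
    have htδu : t ≤ δ u := htδ.trans (Finset.inf'_le δ huT)
    have htr : t ≤ r := htδu.trans (hδr u hu)
    have h1 : ε u * t ≤ f' (x + t • u) u := hkey u hu t ht htδu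
    have h2 : f' (x + t • u) u - 2 * Kr * t * ‖u - v‖ ≤ f' (x + t • v) v :=
      hlipq u v hu hv t ht htr
    have hdist : ‖u - v‖ ≤ ε u / (4 * Kr + 1) := by
      have := Metric.mem_ball.mp hvu
      rw [dist_comm, dist_eq_norm] at this
      exact this.le
    have hεu0 : 0 < ε u := hε0 u hu
    have hmle : m ≤ ε u / 2 := Finset.inf'_le (fun u => ε u / 2) huT
    have hKbound : 2 * Kr * t * ‖u - v‖ ≤ (ε u / 2) * t := by
      have hb : 2 * Kr * ‖u - v‖ ≤ ε u / 2 := by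
        have h4 : (0 : ℝ) < 4 * Kr + 1 := by positivity
        calc 2 * Kr * ‖u - v‖ ≤ 2 * Kr * (ε u / (4 * Kr + 1)) := by
              exact mul_le_mul_of_nonneg_left hdist (by positivity)
          _ ≤ ε u / 2 := by
              have heq : 2 * Kr * (ε u / (4 * Kr + 1)) = (2 * Kr * ε u) / (4 * Kr + 1) := by
                ring
              rw [heq, div_le_div_iff₀ h4 (by norm_num : (0:ℝ) < 2)]
              nlinarith
      calc 2 * Kr * t * ‖u - v‖ = (2 * Kr * ‖u - v‖) * t := by ring
        _ ≤ (ε u / 2) * t := mul_le_mul_of_nonneg_right hb ht.le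
    have : (ε u / 2) * t ≤ f' (x + t • v) v := by linarith
    calc m * t ≤ (ε u / 2) * t := mul_le_mul_of_nonneg_right hmle ht.le
      _ ≤ f' (x + t • v) v := this
  -- integrate the derivative bound
  have integral_est : ∀ v : E, ‖v‖ = 1 → ∀ s : ℝ, 0 < s → s ≤ δ' →
      f x + m / 2 * s ^ 2 ≤ f (x + s • v) := by
    intro v hv s hs hsδ
    have hsr : s ≤ r := hsδ.trans hδ'r
    set g' : ℝ → ℝ := fun t => f' (x + t • v) v with hg'def
    have hcurve : ∀ t : ℝ, HasDerivAt (fun t : ℝ => x + t • v) v t := by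
      intro t
      simpa using ((hasDerivAt_id t).smul_const v).const_add x
    have hderiv : ∀ t ∈ Set.uIcc (0 : ℝ) s, HasDerivAt (fun t => f (x + t • v)) (g' t) t := by
      intro t ht
      rw [Set.uIcc_of_le hs.le] at ht
      have hmemU : x + t • v ∈ U := hmem v hv t ht.1 (ht.2.trans hsr)
      exact (hdiff _ hmemU).comp_hasDerivAt t (hcurve t)
    have hcont : ContinuousOn g' (Set.Icc 0 s) := by
      have h1 : ContinuousOn (fun t : ℝ => x + t • v) (Set.Icc 0 s) := by
        apply Continuous.continuousOn
        exact continuous_const.add (continuous_id.smul continuous_const)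
      have hmaps : Set.MapsTo (fun t : ℝ => x + t • v) (Set.Icc 0 s) U :=
        fun t ht => hmem v hv t ht.1 (ht.2.trans hsr)
      have h2 : ContinuousOn (fun t : ℝ => f' (x + t • v)) (Set.Icc 0 s) :=
        hK.continuousOn.comp h1 hmaps
      exact (ContinuousLinearMap.apply ℝ ℝ v).continuous.comp_continuousOn h2
    have hint : IntervalIntegrable g' MeasureTheory.volume 0 s := by
      apply ContinuousOn.intervalIntegrable
      rwa [Set.uIcc_of_le hs.le]
    have hFTC : ∫ t in (0 : ℝ)..s, g' t = f (x + s • v) - f x := by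
      have := intervalIntegral.integral_eq_sub_of_hasDerivAt hderiv hint
      simpa using this
    have hint1 : IntervalIntegrable (fun t : ℝ => m * t) MeasureTheory.volume 0 s :=
      (continuous_const.mul continuous_id).intervalIntegrable 0 s
    have hmono : ∫ t in (0 : ℝ)..s, m * t ≤ ∫ t in (0 : ℝ)..s, g' t := by
      apply intervalIntegral.integral_mono_on hs.le hint1 hint
      intro t ht
      rcases eq_or_lt_of_le ht.1 with h0 | h0
      · have : g' t = 0 := by
          simp only [hg'def, ← h0, zero_smul, add_zero, hcrit, ContinuousLinearMap.zero_apply]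
        rw [this, ← h0, mul_zero]
      · exact main v hv t h0 (ht.2.trans hsδ)
    have hval : ∫ t in (0 : ℝ)..s, m * t = m / 2 * s ^ 2 := by
      rw [intervalIntegral.integral_const_mul, integral_id]
      ring
    rw [hval] at hmono
    rw [hFTC] at hmono
    linarith
  -- assemble the conclusion
  have final : ∀ y ∈ Metric.closedBall x δ', y ≠ x →
      f x + m / 2 * ‖y - x‖ ^ 2 ≤ f y := by
    intro y hy hyx
    set s : ℝ := ‖y - x‖ with hsdef
    have hs0 : 0 < s := by
      rw [hsdef, norm_pos_iff]
      exact sub_ne_zero_of_ne hyx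
    set v : E := s⁻¹ • (y - x) with hvdef
    have hv : ‖v‖ = 1 := by
      rw [hvdef, norm_smul, Real.norm_eq_abs, abs_of_pos (inv_pos.mpr hs0), ← hsdef,
        inv_mul_cancel₀ hs0.ne']
    have hy' : x + s • v = y := by
      rw [hvdef, smul_smul, mul_inv_cancel₀ hs0.ne', one_smul]
      abel
    have hsδ : s ≤ δ' := by
      have := Metric.mem_closedBall.mp hy
      rwa [dist_eq_norm] at this
    have := integral_est v hv s hs0 hsδ
    rwa [hy'] at this
  have hNmem : Metric.closedBall x δ' ∈ 𝓝 x := Metric.closedBall_mem_nhds x hδ'0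
  constructor
  · refine ⟨Metric.closedBall x δ', hNmem, ?_⟩
    intro y hy hyx
    have h := final y hy hyx
    have hs2 : 0 < ‖y - x‖ ^ 2 :=
      pow_pos (norm_pos_iff.mpr (sub_ne_zero_of_ne hyx)) 2
    have hms : 0 < m / 2 * ‖y - x‖ ^ 2 := mul_pos (by linarith) hs2
    linarith
  · refine ⟨m / 4, by linarith, Metric.closedBall x δ', hNmem, ?_⟩
    intro y hy hyx
    have h := final y hy hyx
    have hs2 : 0 < ‖y - x‖ ^ 2 :=
      pow_pos (norm_pos_iff.mpr (sub_ne_zero_of_ne hyx)) 2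
    have hlt : m / 4 * ‖y - x‖ ^ 2 < m / 2 * ‖y - x‖ ^ 2 :=
      mul_lt_mul_of_pos_right (by linarith) hs2
    linarith
end

section
/- Let f be a C^{1,1} function on an open set X ⊆ ℝⁿ (continuously differentiable with locally Lipschitz gradient) and let x₀ ∈ X be a local minimizer of f over X. Then for every direction d ∈ ℝⁿ, limsup_{t↓0} (∇f(x₀+td)(d) − ∇f(x₀)(d))/t ≥ 0. -/
open Filter Topology

/-- Let `f` be a `C^{1,1}` function on an open set `X ⊆ ℝⁿ` (Fréchet
differentiable on `X` with locally Lipschitz derivative `f'`) and let `x₀ ∈ X` be a local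
minimizer of `f` over `X`. Then for every direction `d`,
`limsup_{t↓0} (∇f(x₀+td)(d) − ∇f(x₀)(d))/t ≥ 0`. -/
theorem c11_local_min_second_order_necessary (n : ℕ)
    (X : Set (EuclideanSpace ℝ (Fin n))) (hX : IsOpen X)
    (f : EuclideanSpace ℝ (Fin n) → ℝ)
    (f' : EuclideanSpace ℝ (Fin n) → EuclideanSpace ℝ (Fin n) →L[ℝ] ℝ)
    (hdiff : ∀ y ∈ X, HasFDerivAt f (f' y) y)
    (hlip : ∀ y ∈ X, ∃ U ∈ 𝓝 y, ∃ K : NNReal, LipschitzOnWith K f' (U ∩ X))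
    (x₀ : EuclideanSpace ℝ (Fin n)) (hx₀ : x₀ ∈ X)
    (hmin : ∃ N ∈ 𝓝 x₀, N ⊆ X ∧ ∀ x ∈ N, f x₀ ≤ f x) :
    ∀ d : EuclideanSpace ℝ (Fin n),
      0 ≤ Filter.limsup
        (fun t : ℝ => (((f' (x₀ + t • d)) d - (f' x₀) d) / t : ℝ) : ℝ → EReal)
        (𝓝[>] (0 : ℝ)) := by
  intro d
  by_contra h
  push_neg at h
  obtain ⟨N, hN, hNX, hNm⟩ := hmin
  -- local min implies f' x₀ = 0
  have hloc : IsLocalMin f x₀ := Filter.eventually_iff_exists_mem.mpr ⟨N, hN, hNm⟩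
  have hf'0 : f' x₀ = 0 := hloc.hasFDerivAt_eq_zero (hdiff x₀ hx₀)
  -- pick a real r with limsup < r < 0
  obtain ⟨r, hr1, hr2⟩ := EReal.exists_between_coe_real h
  have hr0 : r < 0 := by exact_mod_cast hr2
  have hev : ∀ᶠ t in 𝓝[>] (0:ℝ),
      ((f' (x₀ + t • d)) d - (f' x₀) d) / t < r := by
    have hb : Filter.IsBoundedUnder (· ≤ ·) (𝓝[>] (0:ℝ))
        (fun t : ℝ => (((f' (x₀ + t • d)) d - (f' x₀) d) / t : EReal)) :=
      ⟨⊤, Filter.Eventually.of_forall fun _ => le_top⟩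
    have := Filter.eventually_lt_of_limsup_lt hr1 hb
    filter_upwards [this] with t ht
    exact_mod_cast ht
  obtain ⟨ε, hε, hsub⟩ := mem_nhdsGT_iff_exists_Ioo_subset.mp hev
  rw [Set.mem_Ioi] at hε
  -- the curve c t = x₀ + t • d
  set c : ℝ → EuclideanSpace ℝ (Fin n) := fun t => x₀ + t • d with hc
  have hc0 : c 0 = x₀ := by simp [hc]
  have hccont : Continuous c := by continuity
  have hNpre : c ⁻¹' N ∈ 𝓝 (0:ℝ) := by
    have hc' : ContinuousAt c 0 := hccont.continuousAt
    exact hc'.preimage_mem_nhds (hc0 ▸ hN)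
  obtain ⟨δ, hδ, hball⟩ := Metric.mem_nhds_iff.mp hNpre
  set T : ℝ := min (ε/2) (δ/2) with hT
  have hT0 : 0 < T := lt_min (by linarith) (by linarith)
  have hTε : T < ε := lt_of_le_of_lt (min_le_left _ _) (by linarith)
  have hTδ : T < δ := lt_of_le_of_lt (min_le_right _ _) (by linarith)
  have hmem : ∀ s ∈ Set.Icc (0:ℝ) T, c s ∈ N := by
    intro s hs
    apply hball
    have : |s| < δ := by
      rw [abs_lt]; constructor <;> [linarith [hs.1]; linarith [hs.2]]
    simpa [Real.dist_eq] using this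
  -- derivative of g = f ∘ c
  have hcderiv : ∀ s : ℝ, HasDerivAt c d s := by
    intro s
    have h1 : HasDerivAt (fun t : ℝ => t • d) ((1:ℝ) • d) s :=
      (hasDerivAt_id s).smul_const d
    simpa [hc] using h1.const_add x₀
  have hgderiv : ∀ s ∈ Set.Icc (0:ℝ) T, HasDerivAt (f ∘ c) ((f' (c s)) d) s := by
    intro s hs
    exact (hdiff (c s) (hNX (hmem s hs))).comp_hasDerivAt s (hcderiv s)
  have hneg : ∀ s ∈ interior (Set.Icc (0:ℝ) T), deriv (f ∘ c) s < 0 := by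
    intro s hs
    rw [interior_Icc] at hs
    have hsIcc : s ∈ Set.Icc (0:ℝ) T := ⟨le_of_lt hs.1, le_of_lt hs.2⟩
    rw [(hgderiv s hsIcc).deriv]
    have hsIoo : s ∈ Set.Ioo (0:ℝ) ε := ⟨hs.1, lt_trans hs.2 hTε⟩
    have := hsub hsIoo
    simp only [Set.mem_setOf_eq] at this
    rw [hf'0] at this
    simp only [ContinuousLinearMap.zero_apply, sub_zero] at this
    have := (div_lt_iff₀ hs.1).mp this
    calc (f' (c s)) d < r * s := this
      _ < 0 := mul_neg_of_neg_of_pos hr0 hs.1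
  have hcont : ContinuousOn (f ∘ c) (Set.Icc (0:ℝ) T) := fun s hs =>
    ((hgderiv s hs).continuousAt).continuousWithinAt
  have hanti : StrictAntiOn (f ∘ c) (Set.Icc (0:ℝ) T) :=
    strictAntiOn_of_deriv_neg (convex_Icc _ _) hcont hneg
  have h0 : (0:ℝ) ∈ Set.Icc (0:ℝ) T := ⟨le_refl _, le_of_lt hT0⟩
  have hTmem : T ∈ Set.Icc (0:ℝ) T := ⟨le_of_lt hT0, le_refl _⟩
  have := hanti h0 hTmem hT0
  simp only [Function.comp, hc0] at this
  exact absurd this (not_lt.mpr (hNm _ (hmem T hTmem)))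
end
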